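/- arXiv:1503.08791 — 5 statements merged into one kernel-verified Lean document; each statement's English description precedes it below -/
import Mathlib

section
/- Let D ⊆ ℂ be the closed unit disc and let q ∈ ℂ with |q| < 1. Let P, R, S, f be bounded functions on D and s a constant with |S(u)| ≤ s < 1 for all u ∈ D. If f(u) = P(u) + R(q u^t) f(1) + S(q u^t) f(q u^t) holds for all u ∈ D, then f(u) = a(u) + b(u)·a(1)/(1 − b(1)) for all u ∈ D, where a(u) = Σ_{j≥0} P(q^{h_j} u^{t^j}) ∏_{i=1}^{j} S(q^{h_i} u^{t^i}) and b(u) = Σ_{j≥1} R(q^{h_j} u^{t^j}) ∏_{i=1}^{j−1} S(q^{h_i} u^{t^i}), provided b(1) ≠ 1. -/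
open scoped BigOperators
open Filter MeasureTheory

noncomputable section

/-- `hp t j = 1 + t + ⋯ + t^(j-1) = (t^j - 1)/(t-1)`. -/
def hp (t j : ℕ) : ℕ := ∑ i ∈ Finset.range j, t ^ i

/-- The series `b(q,u,v,w)`
`b = Σ_{j≥1} v q^{h_j} u^{t^j} w^j/(1−q^{h_j} u^{t^j}) ∏_{i=1}^{j−1} (1−v−q^{h_i}u^{t^i})/(1−q^{h_i}u^{t^i})`. -/
def bGF (t : ℕ) (q u v w : ℂ) : ℂ :=
  ∑' j : ℕ,
    v * q ^ hp t (j + 1) * u ^ t ^ (j + 1) * w ^ (j + 1) /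
        (1 - q ^ hp t (j + 1) * u ^ t ^ (j + 1)) *
      ∏ i ∈ Finset.Icc 1 j,
        (1 - v - q ^ hp t i * u ^ t ^ i) / (1 - q ^ hp t i * u ^ t ^ i)

/-- The series `a(q,u,v,w)` (for canonical forests with `r` roots)
`a = Σ_{j≥0} v q^{r h_j} u^{r t^j} w^j ∏_{i=1}^{j} (1−v−q^{h_i}u^{t^i})/(1−q^{h_i}u^{t^i})`. -/
def aGF (t r : ℕ) (q u v w : ℂ) : ℂ :=
  ∑' j : ℕ,
    v * q ^ (r * hp t j) * u ^ (r * t ^ j) * w ^ j *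
      ∏ i ∈ Finset.Icc 1 j,
        (1 - v - q ^ hp t i * u ^ t ^ i) / (1 - q ^ hp t i * u ^ t ^ i)

/-- A canonical `t`-ary forest with `r` (ordered) roots, encoded by its sequence of
numbers of internal vertices on each level (a canonical forest is uniquely determined
by this sequence: on each level the leaves come first, since outdegrees read from left
to right are non-decreasing).  The number `c_0` of internal vertices on level `0` is at
most `r`, each level's internal-vertex count satisfies `1 ≤ c_{k+1} ≤ t·c_k`, and the
list stops at the last level containing internal vertices. -/
structure CanonicalForest (t r : ℕ) where
  levels : List ℕ
  pos : ∀ c ∈ levels, 0 < c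
  head_le : ∀ c ∈ levels.head?, c ≤ r
  chain : levels.Chain' fun a b => b ≤ t * a

namespace CanonicalForest

variable {t r : ℕ} (T : CanonicalForest t r)

/-- the number `n(T)` of internal vertices -/
def size : ℕ := T.levels.sum

/-- the height `h(T)`: the maximal distance of a leaf from the root level -/
def height : ℕ := T.levels.length

/-- the number of internal vertices at depth `k` -/
def internAt (k : ℕ) : ℕ := T.levels.getD k 0

/-- the number of vertices at depth `k` -/
def vertsAt (k : ℕ) : ℕ := if k = 0 then r else t * T.internAt (k - 1)

/-- the number of leaves at depth `k` -/
def leavesAt (k : ℕ) : ℕ := T.vertsAt k - T.internAt k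

/-- the number `m(T)` of leaves at maximal depth -/
def lastLeaves : ℕ := T.vertsAt T.height

/-- the number `d(T)` of distinct depths at which leaves occur -/
def distinctDepths : ℕ :=
  ((Finset.range (T.height + 1)).filter fun k => 0 < T.leavesAt k).card

/-- the (leaf-)width `w(T)`: the maximal number of leaves on one level -/
def width : ℕ := (Finset.range (T.height + 1)).sup fun k => T.leavesAt k

/-- the total path length `ℓ(T)`: the sum of the depths of all vertices -/
def pathLength : ℕ := ∑ k ∈ Finset.range (T.height + 1), k * T.vertsAt k

end CanonicalForest

/-- the number of canonical `t`-ary forests with `r` roots and `n` internal vertices -/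
def forestCount (t r n : ℕ) : ℕ := Nat.card {T : CanonicalForest t r // T.size = n}

/-- the probability of an event under the uniform distribution on canonical `t`-ary
forests with `r` roots and `n` internal vertices -/
def forestProb (t r n : ℕ) (s : Set (CanonicalForest t r)) : ℝ :=
  (Nat.card {T : CanonicalForest t r // T.size = n ∧ T ∈ s} : ℝ) / forestCount t r n

/-- the expectation of a random variable under the uniform distribution on canonical
`t`-ary forests with `r` roots and `n` internal vertices -/
def forestExp (t r n : ℕ) (f : CanonicalForest t r → ℝ) : ℝ :=
  (∑ᶠ T : {T : CanonicalForest t r // T.size = n}, f T.1) / forestCount t r n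

/-- the variance of a random variable under the uniform distribution on canonical
`t`-ary forests with `r` roots and `n` internal vertices -/
def forestVar (t r n : ℕ) (f : CanonicalForest t r → ℝ) : ℝ :=
  forestExp t r n (fun T => f T ^ 2) - forestExp t r n f ^ 2

/-- the distribution function of the standard normal distribution -/
def stdGaussCDF (x : ℝ) : ℝ :=
  (Real.sqrt (2 * Real.pi))⁻¹ * ∫ u in Set.Iic x, Real.exp (-u ^ 2 / 2)

/-- the density of the standard normal distribution -/
def stdGaussPDF (x : ℝ) : ℝ :=
  (Real.sqrt (2 * Real.pi))⁻¹ * Real.exp (-x ^ 2 / 2)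


/-- The iteration lemma for the functional equation
`f(u) = P(u) + R(q u^t) f(1) + S(q u^t) f(q u^t)` on the closed unit disc. -/
theorem functional_equation_solution (t : ℕ) (ht : 2 ≤ t) (q : ℂ) (hq : ‖q‖ < 1)
    (P R S f : ℂ → ℂ) (s : ℝ)
    (hP : ∃ C, ∀ u ∈ Metric.closedBall (0 : ℂ) 1, ‖P u‖ ≤ C)
    (hR : ∃ C, ∀ u ∈ Metric.closedBall (0 : ℂ) 1, ‖R u‖ ≤ C)
    (hf : ∃ C, ∀ u ∈ Metric.closedBall (0 : ℂ) 1, ‖f u‖ ≤ C)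
    (hS : ∀ u ∈ Metric.closedBall (0 : ℂ) 1, ‖S u‖ ≤ s) (hs : s < 1)
    (heq : ∀ u ∈ Metric.closedBall (0 : ℂ) 1,
      f u = P u + R (q * u ^ t) * f 1 + S (q * u ^ t) * f (q * u ^ t))
    (a b : ℂ → ℂ)
    (ha : ∀ u : ℂ, a u = ∑' j : ℕ,
      P (q ^ hp t j * u ^ t ^ j) * ∏ i ∈ Finset.Icc 1 j, S (q ^ hp t i * u ^ t ^ i))
    (hb : ∀ u : ℂ, b u = ∑' j : ℕ,
      R (q ^ hp t (j + 1) * u ^ t ^ (j + 1)) *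
        ∏ i ∈ Finset.Icc 1 j, S (q ^ hp t i * u ^ t ^ i))
    (hb1 : b 1 ≠ 1) :
    ∀ u ∈ Metric.closedBall (0 : ℂ) 1, f u = a u + b u * a 1 / (1 - b 1) := by
  obtain ⟨Cp, hCp⟩ := hP
  obtain ⟨Cr, hCr⟩ := hR
  obtain ⟨Cf, hCf⟩ := hf
  have h0ball : (0 : ℂ) ∈ Metric.closedBall (0 : ℂ) 1 := by simp
  have hs0 : 0 ≤ s := le_trans (norm_nonneg _) (hS 0 h0ball)
  have hCp0 : 0 ≤ Cp := le_trans (norm_nonneg _) (hCp 0 h0ball)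
  have hCr0 : 0 ≤ Cr := le_trans (norm_nonneg _) (hCr 0 h0ball)
  have hCf0 : 0 ≤ Cf := le_trans (norm_nonneg _) (hCf 0 h0ball)
  -- recurrence for hp
  have hps : ∀ j, hp t (j + 1) = t * hp t j + 1 := fun j => geom_sum_succ
  -- recurrence for the iterates
  have hgrec : ∀ (j : ℕ) (u : ℂ),
      q * (q ^ hp t j * u ^ t ^ j) ^ t = q ^ hp t (j + 1) * u ^ t ^ (j + 1) := by
    intro j u
    rw [hps j, mul_pow, ← pow_mul, ← pow_mul, pow_succ t j]
    ring
  -- the iterates stay in the closed unit ball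
  have hmem : ∀ u ∈ Metric.closedBall (0 : ℂ) 1, ∀ j : ℕ,
      q ^ hp t j * u ^ t ^ j ∈ Metric.closedBall (0 : ℂ) 1 := by
    intro u hu j
    simp only [Metric.mem_closedBall, dist_zero_right] at hu ⊢
    calc ‖q ^ hp t j * u ^ t ^ j‖ = ‖q‖ ^ hp t j * ‖u‖ ^ t ^ j := by
          rw [norm_mul, norm_pow, norm_pow]
      _ ≤ 1 * 1 := by
          apply mul_le_mul
          · exact pow_le_one₀ (norm_nonneg q) hq.le
          · exact pow_le_one₀ (norm_nonneg u) hu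
          · positivity
          · norm_num
      _ = 1 := by norm_num
  -- bound on the products of S-values
  have hSp : ∀ u ∈ Metric.closedBall (0 : ℂ) 1, ∀ j : ℕ,
      ‖∏ i ∈ Finset.Icc 1 j, S (q ^ hp t i * u ^ t ^ i)‖ ≤ s ^ j := by
    intro u hu j
    calc ‖∏ i ∈ Finset.Icc 1 j, S (q ^ hp t i * u ^ t ^ i)‖
        ≤ ∏ i ∈ Finset.Icc 1 j, ‖S (q ^ hp t i * u ^ t ^ i)‖ := Finset.norm_prod_le _ _
      _ ≤ ∏ _i ∈ Finset.Icc 1 j, s :=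
          Finset.prod_le_prod (fun i _ => norm_nonneg _)
            (fun i _ => hS _ (hmem u hu i))
      _ = s ^ j := by rw [Finset.prod_const, Nat.card_Icc]; norm_num
  have hgeo : Summable fun j : ℕ => s ^ j := summable_geometric_of_lt_one hs0 hs
  -- summability of the two series
  have hsa : ∀ u ∈ Metric.closedBall (0 : ℂ) 1,
      Summable (fun j : ℕ => P (q ^ hp t j * u ^ t ^ j) *
        ∏ i ∈ Finset.Icc 1 j, S (q ^ hp t i * u ^ t ^ i)) := by
    intro u hu
    apply Summable.of_norm_bounded (g := fun j => Cp * s ^ j) (hgeo.mul_left Cp)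
    intro j
    rw [norm_mul]
    exact mul_le_mul (hCp _ (hmem u hu j)) (hSp u hu j) (norm_nonneg _) hCp0
  have hsb : ∀ u ∈ Metric.closedBall (0 : ℂ) 1,
      Summable (fun j : ℕ => R (q ^ hp t (j + 1) * u ^ t ^ (j + 1)) *
        ∏ i ∈ Finset.Icc 1 j, S (q ^ hp t i * u ^ t ^ i)) := by
    intro u hu
    apply Summable.of_norm_bounded (g := fun j => Cr * s ^ j) (hgeo.mul_left Cr)
    intro j
    rw [norm_mul]
    exact mul_le_mul (hCr _ (hmem u hu (j + 1))) (hSp u hu j) (norm_nonneg _) hCr0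
  -- the iterated functional equation
  have key : ∀ u ∈ Metric.closedBall (0 : ℂ) 1, ∀ N : ℕ,
      f u = (∑ j ∈ Finset.range N,
          (P (q ^ hp t j * u ^ t ^ j) + R (q ^ hp t (j + 1) * u ^ t ^ (j + 1)) * f 1) *
            ∏ i ∈ Finset.Icc 1 j, S (q ^ hp t i * u ^ t ^ i)) +
        (∏ i ∈ Finset.Icc 1 N, S (q ^ hp t i * u ^ t ^ i)) *
          f (q ^ hp t N * u ^ t ^ N) := by
    intro u hu N
    induction N with
    | zero => simp [hp]
    | succ N ih =>
      have h1 := heq _ (hmem u hu N)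
      rw [hgrec N u] at h1
      rw [ih, h1, Finset.sum_range_succ,
        Finset.prod_Icc_succ_top (Nat.le_add_left 1 N)]
      ring
  -- passing to the limit
  have main : ∀ u ∈ Metric.closedBall (0 : ℂ) 1, f u = a u + b u * f 1 := by
    intro u hu
    have hA := (hsa u hu).hasSum.tendsto_sum_nat
    have hB := (hsb u hu).hasSum.tendsto_sum_nat
    have hrem : Filter.Tendsto
        (fun N : ℕ => (∏ i ∈ Finset.Icc 1 N, S (q ^ hp t i * u ^ t ^ i)) *
          f (q ^ hp t N * u ^ t ^ N)) Filter.atTop (nhds 0) := by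
      apply squeeze_zero_norm (a := fun N : ℕ => s ^ N * Cf)
      · intro N
        rw [norm_mul]
        exact mul_le_mul (hSp u hu N) (hCf _ (hmem u hu N)) (norm_nonneg _)
          (pow_nonneg hs0 N)
      · have := (tendsto_pow_atTop_nhds_zero_of_lt_one hs0 hs).mul_const Cf
        simpa using this
    have hT : Filter.Tendsto
        (fun N : ℕ => ∑ j ∈ Finset.range N,
          (P (q ^ hp t j * u ^ t ^ j) + R (q ^ hp t (j + 1) * u ^ t ^ (j + 1)) * f 1) *
            ∏ i ∈ Finset.Icc 1 j, S (q ^ hp t i * u ^ t ^ i))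
        Filter.atTop (nhds (a u + b u * f 1)) := by
      have heqsum : ∀ N : ℕ,
          (∑ j ∈ Finset.range N,
            (P (q ^ hp t j * u ^ t ^ j) + R (q ^ hp t (j + 1) * u ^ t ^ (j + 1)) * f 1) *
              ∏ i ∈ Finset.Icc 1 j, S (q ^ hp t i * u ^ t ^ i)) =
          (∑ j ∈ Finset.range N, P (q ^ hp t j * u ^ t ^ j) *
              ∏ i ∈ Finset.Icc 1 j, S (q ^ hp t i * u ^ t ^ i)) +
          (∑ j ∈ Finset.range N, R (q ^ hp t (j + 1) * u ^ t ^ (j + 1)) *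
              ∏ i ∈ Finset.Icc 1 j, S (q ^ hp t i * u ^ t ^ i)) * f 1 := by
        intro N
        rw [Finset.sum_mul, ← Finset.sum_add_distrib]
        exact Finset.sum_congr rfl fun j _ => by ring
      rw [ha u, hb u]
      have := hA.add (hB.mul_const (f 1))
      simp only [heqsum]
      exact this
    have hfull : Filter.Tendsto
        (fun N : ℕ => (∑ j ∈ Finset.range N,
          (P (q ^ hp t j * u ^ t ^ j) + R (q ^ hp t (j + 1) * u ^ t ^ (j + 1)) * f 1) *
            ∏ i ∈ Finset.Icc 1 j, S (q ^ hp t i * u ^ t ^ i)) +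
          (∏ i ∈ Finset.Icc 1 N, S (q ^ hp t i * u ^ t ^ i)) *
            f (q ^ hp t N * u ^ t ^ N)) Filter.atTop (nhds (a u + b u * f 1 + 0)) :=
      hT.add hrem
    have hconst : Filter.Tendsto (fun _ : ℕ => f u) Filter.atTop (nhds (f u)) :=
      tendsto_const_nhds
    have : f u = a u + b u * f 1 + 0 := by
      apply tendsto_nhds_unique hconst
      convert hfull using 2 with N
      exact key u hu N
    simpa using this
  have h1ball : (1 : ℂ) ∈ Metric.closedBall (0 : ℂ) 1 := by simp
  have h1' : f 1 = a 1 + b 1 * f 1 := main 1 h1ball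
  have hne : (1 : ℂ) - b 1 ≠ 0 := sub_ne_zero.mpr (Ne.symm hb1)
  have hf1 : f 1 = a 1 / (1 - b 1) := by
    field_simp
    linear_combination h1'
  intro u hu
  rw [main u hu, hf1]
  field_simp

end
end

section
/- Fix an integer t ≥ 2 and let b(q,u,1,1) = Σ_{j≥1} q^{h_j} u^{t^j}/(1−q^{h_j} u^{t^j}) ∏_{i=1}^{j−1} (−q^{h_i} u^{t^i})/(1−q^{h_i} u^{t^i}) (i.e., b(q,u,v,w) specialized at v = w = 1). Then b(q,u,1,1) = Σ_{j≥1} (−1)^{j−1} ∏_{i=1}^{j} q^{h_i} u^{t^i}/(1−q^{h_i} u^{t^i}), it satisfies the functional equation b(q,u,1,1) = (q u^t/(1 − q u^t))·(1 − b(q, q u^t, 1, 1)), and, regarded as a power series in u, the coefficient [u^j] b(q,u,1,1) vanishes whenever j is not a multiple of t. -/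
open scoped BigOperators
open Filter MeasureTheory

noncomputable section

/-! ### Auxiliary lemmas -/

section BAux

open Finset

lemma hp_succ' (t j : ℕ) : hp t (j + 1) = hp t j + t ^ j := Finset.sum_range_succ _ _

lemma hp_one' (t : ℕ) : hp t 1 = 1 := by simp [hp]

lemma hp_mul' (t : ℕ) (ht : 1 ≤ t) (k : ℕ) : (t - 1) * hp t k + 1 = t ^ k := by
  obtain ⟨s, rfl⟩ := Nat.exists_eq_add_of_le ht
  induction k with
  | zero => simp [hp]
  | succ k ih =>
    have hs : 1 + s - 1 = s := by omega
    rw [hs] at ih ⊢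
    calc s * hp (1 + s) (k + 1) + 1
        = (s * hp (1 + s) k + 1) + s * (1 + s) ^ k := by rw [hp_succ']; ring
      _ = (1 + s) ^ k + s * (1 + s) ^ k := by rw [ih]
      _ = (1 + s) ^ (k + 1) := by ring

lemma le_hp' (t k : ℕ) (ht : 1 ≤ t) : k ≤ hp t k := by
  calc k = ∑ _i ∈ Finset.range k, 1 := by simp
    _ ≤ ∑ i ∈ Finset.range k, t ^ i :=
      Finset.sum_le_sum fun i _ => Nat.one_le_pow i t (by omega)

lemma x_eq' (t k : ℕ) (ht : 1 ≤ t) (q u : ℂ) :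
    q ^ hp t k * u ^ t ^ k = (q * u ^ (t - 1)) ^ hp t k * u := by
  conv_lhs => rw [← hp_mul' t ht k]
  rw [pow_add, pow_mul, pow_one, mul_pow]
  ring

/-- Part 1 as a standalone, hypothesis-free identity. -/
lemma bGF_one_one (t : ℕ) (q u : ℂ) :
    bGF t q u 1 1
      = ∑' j : ℕ, (-1 : ℂ) ^ j *
          ∏ i ∈ Finset.Icc 1 (j + 1),
            q ^ hp t i * u ^ t ^ i / (1 - q ^ hp t i * u ^ t ^ i) := by
  unfold bGF
  refine tsum_congr fun j => ?_
  rw [Finset.prod_Icc_succ_top (Nat.le_add_left 1 j)]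
  have h1 : ∀ i ∈ Finset.Icc 1 j,
      (1 - 1 - q ^ hp t i * u ^ t ^ i) / (1 - q ^ hp t i * u ^ t ^ i)
        = (-1) * (q ^ hp t i * u ^ t ^ i / (1 - q ^ hp t i * u ^ t ^ i)) := by
    intro i _
    have h2 : (1 : ℂ) - 1 - q ^ hp t i * u ^ t ^ i = -(q ^ hp t i * u ^ t ^ i) := by ring
    rw [h2, neg_div, neg_one_mul]
  rw [Finset.prod_congr rfl h1, Finset.prod_mul_distrib, Finset.prod_const, Nat.card_Icc]
  simp only [add_tsub_cancel_right, one_mul, one_pow]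
  ring

/-- Summability of the alternating product series. -/
lemma summable_bSeries (t : ℕ) (ht : 2 ≤ t) (q u : ℂ) (hqu : ‖q * u ^ (t - 1)‖ < 1) :
    Summable fun j : ℕ => (-1 : ℂ) ^ j *
      ∏ i ∈ Finset.Icc 1 (j + 1),
        q ^ hp t i * u ^ t ^ i / (1 - q ^ hp t i * u ^ t ^ i) := by
  have ht1 : 1 ≤ t := by omega
  set x : ℕ → ℂ := fun k => q ^ hp t k * u ^ t ^ k with hxdef
  set y : ℕ → ℂ := fun k => x k / (1 - x k) with hydef
  have hxk : ∀ k, ‖x k‖ ≤ ‖q * u ^ (t - 1)‖ ^ k * ‖u‖ := by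
    intro k
    have h1 : ‖x k‖ = ‖q * u ^ (t - 1)‖ ^ hp t k * ‖u‖ := by
      rw [hxdef]; simp only []
      rw [x_eq' t k ht1, norm_mul, norm_pow]
    rw [h1]
    have := pow_le_pow_of_le_one (norm_nonneg _) hqu.le (le_hp' t k ht1)
    exact mul_le_mul_of_nonneg_right this (norm_nonneg u)
  have hx0 : Filter.Tendsto (fun k => ‖x k‖) Filter.atTop (nhds 0) := by
    refine squeeze_zero (fun k => norm_nonneg _) hxk ?_
    have h := (tendsto_pow_atTop_nhds_zero_of_lt_one (norm_nonneg _) hqu).mul_const ‖u‖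
    simpa using h
  have hev : ∀ᶠ k in Filter.atTop, ‖x k‖ < 1 / 3 := hx0.eventually_lt_const (by norm_num)
  have hy : ∀ᶠ k in Filter.atTop, ‖y k‖ ≤ 1 / 2 := by
    filter_upwards [hev] with k hk
    have h1 : (2 / 3 : ℝ) ≤ ‖1 - x k‖ := by
      have h2 := norm_sub_norm_le (1 : ℂ) (x k)
      rw [norm_one] at h2
      linarith
    have h3 : (0 : ℝ) < ‖1 - x k‖ := by linarith
    rw [hydef]; simp only []
    rw [norm_div, div_le_iff₀ h3]
    nlinarith [norm_nonneg (x k)]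
  obtain ⟨N, hN⟩ := Filter.eventually_atTop.mp hy
  refine summable_of_ratio_norm_eventually_le (r := 1 / 2) (by norm_num) ?_
  filter_upwards [Filter.eventually_ge_atTop N] with n hn
  have hkey : (-1 : ℂ) ^ (n + 1) * ∏ i ∈ Finset.Icc 1 (n + 1 + 1), y i
      = -(((-1 : ℂ) ^ n * ∏ i ∈ Finset.Icc 1 (n + 1), y i) * y (n + 2)) := by
    rw [Finset.prod_Icc_succ_top (by omega : 1 ≤ n + 1 + 1)]
    ring
  calc ‖(-1 : ℂ) ^ (n + 1) * ∏ i ∈ Finset.Icc 1 (n + 1 + 1), y i‖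
      = ‖(-1 : ℂ) ^ n * ∏ i ∈ Finset.Icc 1 (n + 1), y i‖ * ‖y (n + 2)‖ := by
        rw [hkey, norm_neg, norm_mul]
    _ ≤ ‖(-1 : ℂ) ^ n * ∏ i ∈ Finset.Icc 1 (n + 1), y i‖ * (1 / 2) := by
        exact mul_le_mul_of_nonneg_left (hN (n + 2) (by omega)) (norm_nonneg _)
    _ = 1 / 2 * ‖(-1 : ℂ) ^ n * ∏ i ∈ Finset.Icc 1 (n + 1), y i‖ := by ring

/-- Unconditional chain rule for `deriv` with a nonzero constant multiple. -/
lemma deriv_comp_const_mul'' {c : ℂ} (hc : c ≠ 0) (f : ℂ → ℂ) (x : ℂ) :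
    deriv (fun y => f (c * y)) x = c * deriv f (c * x) := by
  by_cases hf : DifferentiableAt ℂ f (c * x)
  · have h2 : DifferentiableAt ℂ (fun y : ℂ => c * y) x := differentiableAt_id.const_mul c
    have h3 : deriv (fun y : ℂ => c * y) x = c := by
      simpa using ((hasDerivAt_id x).const_mul c).deriv
    have h4 := deriv_comp x hf h2
    rw [h3] at h4
    rw [show (fun y => f (c * y)) = f ∘ fun y => c * y from rfl, h4, mul_comm]
  · have hf' : ¬ DifferentiableAt ℂ (fun y => f (c * y)) x := by
      intro hd
      apply hf
      have hpt : c⁻¹ * id (c * x) = x := by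
        simp [← mul_assoc, inv_mul_cancel₀ hc]
      have hd2 : DifferentiableAt ℂ (fun y => f (c * y)) (c⁻¹ * id (c * x)) := by
        rw [hpt]; exact hd
      have h5 := hd2.comp (c * x) (differentiableAt_id.const_mul c⁻¹)
      have heq : ((fun y => f (c * y)) ∘ fun y : ℂ => c⁻¹ * y) = f := by
        funext z
        simp [Function.comp, ← mul_assoc, mul_inv_cancel₀ hc]
      rwa [heq] at h5
    rw [deriv_zero_of_not_differentiableAt hf', deriv_zero_of_not_differentiableAt hf,
      mul_zero]

/-- Unconditional scaling rule for iterated derivatives. -/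
lemma iteratedDeriv_comp_const_mul'' {c : ℂ} (hc : c ≠ 0) (n : ℕ) (f : ℂ → ℂ) (x : ℂ) :
    iteratedDeriv n (fun y => f (c * y)) x = c ^ n * iteratedDeriv n f (c * x) := by
  induction n generalizing x with
  | zero => simp
  | succ n ih =>
    rw [iteratedDeriv_succ, iteratedDeriv_succ]
    have h1 : iteratedDeriv n (fun y => f (c * y))
        = fun z => c ^ n * iteratedDeriv n f (c * z) := funext fun z => ih z
    rw [h1, deriv_const_mul_field, deriv_comp_const_mul'' hc (iteratedDeriv n f) x, pow_succ]
    ring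

end BAux


/-- convenient abbreviation for the factors -/
def yAux (t : ℕ) (q u : ℂ) (k : ℕ) : ℂ :=
  q ^ hp t k * u ^ t ^ k / (1 - q ^ hp t k * u ^ t ^ k)

lemma IccProd_eq (t : ℕ) (q u : ℂ) (j : ℕ) :
    (∏ i ∈ Finset.Icc 1 (j + 1),
        q ^ hp t i * u ^ t ^ i / (1 - q ^ hp t i * u ^ t ^ i))
      = ∏ i ∈ Finset.range (j + 1), yAux t q u (i + 1) := by
  rw [← Finset.Ico_add_one_right_eq_Icc, Finset.prod_Ico_eq_prod_range]
  refine Finset.prod_congr rfl fun i _ => ?_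
  rw [yAux, Nat.add_comm 1 i]

lemma bGF_one_one' (t : ℕ) (q u : ℂ) :
    bGF t q u 1 1
      = ∑' j : ℕ, (-1 : ℂ) ^ j * ∏ i ∈ Finset.range (j + 1), yAux t q u (i + 1) := by
  rw [bGF_one_one]
  exact tsum_congr fun j => by rw [IccProd_eq]

lemma summable_bSeries' (t : ℕ) (ht : 2 ≤ t) (q u : ℂ) (hqu : ‖q * u ^ (t - 1)‖ < 1) :
    Summable fun j : ℕ =>
      (-1 : ℂ) ^ j * ∏ i ∈ Finset.range (j + 1), yAux t q u (i + 1) :=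
  (summable_bSeries t ht q u hqu).congr fun j => by rw [IccProd_eq]

lemma yAux_sub (t : ℕ) (q u : ℂ) (i : ℕ) :
    yAux t q (q * u ^ t) i = yAux t q u (i + 1) := by
  have key : q ^ hp t i * (q * u ^ t) ^ t ^ i = q ^ hp t (i + 1) * u ^ t ^ (i + 1) := by
    calc q ^ hp t i * (q * u ^ t) ^ t ^ i
        = q ^ hp t i * (q ^ t ^ i * (u ^ t) ^ t ^ i) := by rw [mul_pow]
      _ = q ^ (hp t i + t ^ i) * u ^ (t * t ^ i) := by rw [pow_add, ← pow_mul]; ring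
      _ = q ^ hp t (i + 1) * u ^ t ^ (i + 1) := by rw [hp_succ', pow_succ']
  rw [yAux, yAux, key]

/-- Part 2: the functional equation. -/
lemma bGF_funEq (t : ℕ) (ht : 2 ≤ t) (q u : ℂ) (hqu : ‖q * u ^ (t - 1)‖ < 1) :
    bGF t q u 1 1 = q * u ^ t / (1 - q * u ^ t) * (1 - bGF t q (q * u ^ t) 1 1) := by
  have ht1 : 1 ≤ t := by omega
  have hy1 : q * u ^ t / (1 - q * u ^ t) = yAux t q u 1 := by
    rw [yAux, hp_one', pow_one, pow_one]
  have hsum := summable_bSeries' t ht q u hqu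
  have hsubst : bGF t q (q * u ^ t) 1 1
      = ∑' j : ℕ, (-1 : ℂ) ^ j * ∏ i ∈ Finset.range (j + 1), yAux t q u (i + 2) := by
    rw [bGF_one_one' t q (q * u ^ t)]
    exact tsum_congr fun j => by
      exact congrArg _ (Finset.prod_congr rfl fun i _ => yAux_sub t q u (i + 1))
  have hterm : ∀ n : ℕ,
      yAux t q u 1 * ((-1 : ℂ) ^ n * ∏ i ∈ Finset.range (n + 1), yAux t q u (i + 2))
        = -((-1 : ℂ) ^ (n + 1) * ∏ i ∈ Finset.range (n + 1 + 1), yAux t q u (i + 1)) := by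
    intro n
    have h := Finset.prod_range_succ' (fun i => yAux t q u (i + 1)) (n + 1)
    rw [h]
    have h2 : (∏ i ∈ Finset.range (n + 1), yAux t q u (i + 1 + 1))
        = ∏ i ∈ Finset.range (n + 1), yAux t q u (i + 2) := rfl
    rw [h2]
    have h3 : yAux t q u (0 + 1) = yAux t q u 1 := rfl
    rw [h3]
    ring
  calc bGF t q u 1 1
      = ∑' j : ℕ, (-1 : ℂ) ^ j * ∏ i ∈ Finset.range (j + 1), yAux t q u (i + 1) :=
        bGF_one_one' t q u
    _ = ((-1 : ℂ) ^ 0 * ∏ i ∈ Finset.range (0 + 1), yAux t q u (i + 1))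
          + ∑' n : ℕ, (-1 : ℂ) ^ (n + 1) * ∏ i ∈ Finset.range (n + 1 + 1), yAux t q u (i + 1) :=
        Summable.tsum_eq_zero_add hsum
    _ = yAux t q u 1
          + ∑' n : ℕ, (-1 : ℂ) ^ (n + 1) * ∏ i ∈ Finset.range (n + 1 + 1), yAux t q u (i + 1) := by
        norm_num [Finset.prod_range_one]
    _ = yAux t q u 1
          - ∑' n : ℕ, -((-1 : ℂ) ^ (n + 1) * ∏ i ∈ Finset.range (n + 1 + 1), yAux t q u (i + 1)) := by
        rw [tsum_neg, sub_neg_eq_add]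
    _ = yAux t q u 1
          - ∑' n : ℕ, yAux t q u 1 *
              ((-1 : ℂ) ^ n * ∏ i ∈ Finset.range (n + 1), yAux t q u (i + 2)) := by
        rw [tsum_congr hterm]
    _ = yAux t q u 1 *
          (1 - ∑' n : ℕ, (-1 : ℂ) ^ n * ∏ i ∈ Finset.range (n + 1), yAux t q u (i + 2)) := by
        rw [mul_one_sub, tsum_mul_left]
    _ = q * u ^ t / (1 - q * u ^ t) * (1 - bGF t q (q * u ^ t) 1 1) := by
        rw [hy1, hsubst]

/-- The specialization `b(q,u,1,1)` equals the alternating series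
`Σ_{j≥1} (−1)^{j−1} ∏_{i=1}^{j} q^{h_i}u^{t^i}/(1−q^{h_i}u^{t^i})`, satisfies the
functional equation `b(q,u,1,1) = qu^t/(1−qu^t)·(1 − b(q,qu^t,1,1))`, and its power-series
coefficient `[u^j] b(q,u,1,1)` vanishes whenever `t ∤ j`. -/
theorem bGF_specialization_v_w_one (t : ℕ) (ht : 2 ≤ t) (q u : ℂ)
    (hq : ‖q‖ < 1) (hqu : ‖q * u ^ (t - 1)‖ < 1) :
    bGF t q u 1 1
        = ∑' j : ℕ, (-1 : ℂ) ^ j *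
            ∏ i ∈ Finset.Icc 1 (j + 1),
              q ^ hp t i * u ^ t ^ i / (1 - q ^ hp t i * u ^ t ^ i)
    ∧ bGF t q u 1 1 = q * u ^ t / (1 - q * u ^ t) * (1 - bGF t q (q * u ^ t) 1 1)
    ∧ ∀ j : ℕ, ¬ t ∣ j → iteratedDeriv j (fun z : ℂ => bGF t q z 1 1) 0 = 0 := by
  refine ⟨bGF_one_one t q u, bGF_funEq t ht q u hqu, ?_⟩
  intro j hj
  set ζ : ℂ := Complex.exp (2 * Real.pi * Complex.I / t) with hζdef
  have hprim : IsPrimitiveRoot ζ t := Complex.isPrimitiveRoot_exp t (by omega)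
  have hζt : ζ ^ t = 1 := hprim.pow_eq_one
  have hζ0 : ζ ≠ 0 := Complex.exp_ne_zero _
  have hpow : ∀ (z : ℂ) (i : ℕ), i ≠ 0 → (ζ * z) ^ t ^ i = z ^ t ^ i := by
    intro z i hi
    obtain ⟨m, hm⟩ := dvd_pow_self t hi
    rw [mul_pow, hm, pow_mul, hζt, one_pow, one_mul]
  have hinv : ∀ z : ℂ, bGF t q (ζ * z) 1 1 = bGF t q z 1 1 := by
    intro z
    unfold bGF
    refine tsum_congr fun k => ?_
    rw [hpow z (k + 1) (by omega)]
    congr 1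
    refine Finset.prod_congr rfl fun i hi => ?_
    have hi1 : 1 ≤ i := (Finset.mem_Icc.mp hi).1
    rw [hpow z i (by omega)]
  have hfun : (fun z : ℂ => bGF t q z 1 1) = fun z => bGF t q (ζ * z) 1 1 :=
    funext fun z => (hinv z).symm
  have hD : iteratedDeriv j (fun z : ℂ => bGF t q z 1 1) 0
      = ζ ^ j * iteratedDeriv j (fun z : ℂ => bGF t q z 1 1) 0 := by
    conv_lhs => rw [hfun]
    rw [iteratedDeriv_comp_const_mul'' hζ0 j (fun z : ℂ => bGF t q z 1 1) 0, mul_zero]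
  have h0 : (1 - ζ ^ j) * iteratedDeriv j (fun z : ℂ => bGF t q z 1 1) 0 = 0 := by
    rw [sub_mul, one_mul, sub_eq_zero]
    exact hD
  rcases mul_eq_zero.mp h0 with h | h
  · exfalso
    apply hj
    exact (hprim.pow_eq_one_iff_dvd j).mp (by rw [← sub_eq_zero]; linear_combination -h)
  · exact h

end
end

section
/- Fix an integer t ≥ 2 and set D(q,w) = 1 − b(q,1,1,w) = Σ_{j≥0} (−1)^j w^j ∏_{i=1}^{j} q^{h_i}/(1−q^{h_i}). Let w = e^{iφ} with φ real and √(97/96)·π·2^{−t/2} < |φ| ≤ π. Then every zero z_0 of the function z ↦ D(1/z, w) satisfies |z_0| < 2 − 1/2^t. -/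
open scoped BigOperators
open Filter MeasureTheory

noncomputable section

lemma aux_8n_le (n : ℕ) (hn : 3 ≤ n) : 8 * n ≤ 3 * 2 ^ n := by
  induction n, hn using Nat.le_induction with
  | base => norm_num
  | succ m hm ih =>
    have h2 : 8 ≤ 2 ^ m := by
      have : (2:ℕ) ^ 3 ≤ 2 ^ m := Nat.pow_le_pow_right (by norm_num) hm
      simpa using this
    have h3 : 3 * 2 ^ (m+1) = 3 * 2 ^ m + 3 * 2 ^ m := by rw [pow_succ]; ring
    omega

lemma aux_le_of_sq_le (a b : ℝ) (ha : 0 ≤ a) (hb : 0 ≤ b) (h : a^2 ≤ b^2) : a ≤ b := by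
  nlinarith

lemma aux_phi_sq_le (E P : ℝ) (hEpos : 0 < E) (hE4 : E ≤ 1/4) (h1 : (3.14:ℝ) ≤ P)
    (h2 : P ≤ 3.15) : (97/96) * P^2 * E ≤ 2.56 := by nlinarith

lemma aux_final (E P : ℝ) (hEpos : 0 < E) (hE4 : E ≤ 1/4) (h1 : (3.14:ℝ) ≤ P)
    (h2 : P ≤ 3.15) :
    2 * (1 - ((97/96) * P^2 * E)/8 + ((97/96) * P^2 * E)^2 * (5/1536)) + E * (40/39) < 2 - E := by
  have hπ2 : (9.8596:ℝ) ≤ P^2 := by nlinarith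
  have hP2 : P^2 ≤ 9.9225 := by nlinarith
  have hπ4 : P^4 ≤ (98.46:ℝ) := by
    have h4 : P^2 * P^2 ≤ 9.9225 * 9.9225 := by
      exact mul_le_mul hP2 hP2 (sq_nonneg P) (by norm_num)
    nlinarith [h4]
  have hA : (9.8596:ℝ) * E ≤ P^2 * E := mul_le_mul_of_nonneg_right hπ2 hEpos.le
  have hE2 : E^2 ≤ E/4 := by nlinarith
  have hB : P^4 * E^2 ≤ 24.615 * E := by
    have hB1 : P^4 * E^2 ≤ 98.46 * E^2 := mul_le_mul_of_nonneg_right hπ4 (sq_nonneg E)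
    nlinarith
  nlinarith [hA, hB]

set_option maxHeartbeats 2000000 in
/-- Outer region: for `w = e^{iφ}` with
`√(97/96)·π·2^{−t/2} < |φ| ≤ π`, every zero `z₀` of `z ↦ D(1/z, w)`, where
`D(q,w) = 1 − b(q,1,1,w) = Σ_{j≥0} (−1)^j w^j ∏_{i=1}^{j} q^{h_i}/(1−q^{h_i})`
(a zero meaning that the series converges to `0` at `q = 1/z₀`),
has absolute value smaller than `2 − 1/2^t`. -/
theorem outer_region_zero_bound (t : ℕ) (ht : 2 ≤ t) (φ : ℝ)
    (hlow : Real.sqrt (97/96) * Real.pi * 2 ^ (-(t : ℝ)/2) < |φ|)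
    (hup : |φ| ≤ Real.pi) (z₀ : ℂ)
    (hzero : HasSum
      (fun j : ℕ => (-1 : ℂ) ^ j * Complex.exp (φ * Complex.I) ^ j *
        ∏ i ∈ Finset.Icc 1 j, (1/z₀) ^ hp t i / (1 - (1/z₀) ^ hp t i))
      0) :
    ‖z₀‖ < 2 - 1/2^t := by
  by_contra hcon
  push_neg at hcon
  set w : ℂ := Complex.exp (φ * Complex.I) with hw
  set q : ℂ := 1/z₀ with hq
  set E : ℝ := 1/2^t with hE
  have h2t : (4:ℝ) ≤ 2 ^ t := by
    calc (4:ℝ) = 2 ^ 2 := by norm_num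
    _ ≤ 2 ^ t := by exact pow_le_pow_right₀ (by norm_num) ht
  have h2tpos : (0:ℝ) < 2 ^ t := by positivity
  have hEpos : 0 < E := by rw [hE]; positivity
  have hE4 : E ≤ 1/4 := by
    rw [hE, div_le_div_iff₀ h2tpos (by norm_num)]; linarith
  have hz : (7:ℝ)/4 ≤ ‖z₀‖ := by linarith
  have hz0 : z₀ ≠ 0 := by
    intro h; rw [h] at hz; simp at hz; linarith
  have hqnorm : ‖q‖ ≤ 1/(2-E) := by
    rw [hq, norm_div, norm_one]
    exact one_div_le_one_div_of_le (by linarith) hcon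
  have hq47 : ‖q‖ ≤ 4/7 := by
    refine hqnorm.trans ?_
    rw [div_le_div_iff₀ (by linarith) (by norm_num)]; linarith
  have hq1 : ‖q‖ ≤ 1 := by linarith
  -- Bernoulli bound : ‖q‖^(t+1) ≤ (4/5) E
  have hbern : ((5:ℝ)/8) * 2 ^ (t+1) ≤ (2 - E) ^ (t+1) := by
    have h38 : ((t:ℝ)+1) * (E/2) ≤ 3/8 := by
      have hc : (8:ℝ) * ((t:ℝ)+1) ≤ 3 * 2 ^ (t+1) := by
        exact_mod_cast aux_8n_le (t+1) (by omega)
      have hEE : E * 2 ^ t = 1 := by rw [hE]; field_simp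
      have h2t1 : (2:ℝ) ^ (t+1) = 2 * 2 ^ t := by rw [pow_succ]; ring
      nlinarith [mul_le_mul_of_nonneg_right hc hEpos.le]
    have hb : (1:ℝ) + ((t:ℕ)+1 : ℕ) * (-(E/2)) ≤ (1 + (-(E/2))) ^ (t+1) :=
      one_add_mul_le_pow (by linarith) (t+1)
    have heq : (2 - E) ^ (t+1) = 2^(t+1) * (1 + (-(E/2)))^(t+1) := by
      rw [← mul_pow]; ring_nf
    rw [heq]
    have h58 : (5:ℝ)/8 ≤ (1 + (-(E/2)))^(t+1) := by
      push_cast at hb; nlinarith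
    nlinarith [pow_pos (show (0:ℝ) < 2 by norm_num) (t+1)]
  have hqpow : ‖q‖ ^ (t+1) ≤ (4/5) * E := by
    have h1 : ‖q‖ ^ (t+1) ≤ 1 / (2-E) ^ (t+1) := by
      rw [← one_div_pow]
      exact pow_le_pow_left₀ (norm_nonneg q) hqnorm (t+1)
    have h3 : (1:ℝ) / (2-E)^(t+1) ≤ 1 / ((5/8) * 2^(t+1)) :=
      one_div_le_one_div_of_le (by positivity) hbern
    have h4 : (1:ℝ) / ((5/8) * 2^(t+1)) = (4/5) * E := by
      rw [hE, pow_succ]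
      field_simp
      ring
    exact h1.trans (h3.trans_eq h4)
  -- hp facts
  have hp1 : hp t 1 = 1 := by simp [hp]
  have hpmono : ∀ i j, i ≤ j → hp t i ≤ hp t j := by
    intro i j hij
    exact Finset.sum_le_sum_of_subset (Finset.range_subset_range.2 hij)
  have hp2 : hp t 2 = 1 + t := by
    simp [hp, Finset.sum_range_succ]
  have hp2le : ∀ i, 2 ≤ i → t + 1 ≤ hp t i := by
    intro i hi
    have := hpmono 2 i hi
    omega
  have hp3le : ∀ i, 3 ≤ i → 7 ≤ hp t i := by
    intro i hi
    have h1 : hp t 3 ≤ hp t i := hpmono 3 i hi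
    have h2 : hp t 3 = 1 + t + t^2 := by
      simp [hp, Finset.sum_range_succ]
      try ring
    have h3 : 4 ≤ t^2 := by nlinarith
    omega
  -- bounds on the factors r i
  set r : ℕ → ℂ := fun i => q ^ hp t i / (1 - q ^ hp t i) with hr
  have hkey : ∀ (i : ℕ) (a : ℝ), ‖q ^ hp t i‖ ≤ a → a ≤ 1/5 → ‖r i‖ ≤ (5/4) * a := by
    intro i a h1 h2
    have hd : (4:ℝ)/5 ≤ ‖1 - q ^ hp t i‖ := by
      have h3 := norm_sub_norm_le (1:ℂ) (q ^ hp t i)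
      rw [norm_one] at h3
      linarith
    have h5 : ‖r i‖ ≤ a / (4/5) := by
      rw [hr]
      simp only []
      rw [norm_div]
      exact div_le_div₀ (by linarith [norm_nonneg (q ^ hp t i)]) h1 (by norm_num) hd
    have h6 : a / (4/5) = (5/4) * a := by ring
    linarith [h5, h6.le]
  have hr2 : ‖r 2‖ ≤ E := by
    have h1 : ‖q ^ hp t 2‖ ≤ (4/5) * E := by
      rw [norm_pow]
      calc ‖q‖ ^ hp t 2 ≤ ‖q‖ ^ (t+1) :=
            pow_le_pow_of_le_one (norm_nonneg q) hq1 (hp2le 2 le_rfl)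
        _ ≤ (4/5) * E := hqpow
    have h2 := hkey 2 ((4/5) * E) h1 (by linarith)
    linarith
  have hr3 : ∀ i, 3 ≤ i → ‖r i‖ ≤ 1/40 := by
    intro i hi
    have h1 : ‖q ^ hp t i‖ ≤ 1/50 := by
      rw [norm_pow]
      calc ‖q‖ ^ hp t i ≤ (4/7 : ℝ) ^ hp t i :=
            pow_le_pow_left₀ (norm_nonneg q) hq47 _
        _ ≤ (4/7 : ℝ) ^ 7 :=
            pow_le_pow_of_le_one (by norm_num) (by norm_num) (hp3le i hi)
        _ ≤ 1/50 := by norm_num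
    have h2 := hkey i (1/50) h1 (by norm_num)
    linarith
  -- nonvanishing facts
  have hwne : w ≠ 0 := Complex.exp_ne_zero _
  have hwnorm : ‖w‖ = 1 := by
    rw [hw, Complex.norm_exp_ofReal_mul_I]
  have hq0 : q ≠ 0 := one_div_ne_zero hz0
  have h1q : (1:ℂ) - q ≠ 0 := by
    intro h
    have : q = 1 := by linear_combination -h
    rw [this] at hq47
    norm_num at hq47
  have hr1 : r 1 = q / (1 - q) := by rw [hr]; simp [hp1]
  have hr1ne : r 1 ≠ 0 := by rw [hr1]; exact div_ne_zero hq0 h1q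
  -- series manipulation
  set f : ℕ → ℂ := fun j => (-1:ℂ)^j * w^j * ∏ i ∈ Finset.Icc 1 j, r i with hf
  have hzero' : HasSum f 0 := hzero
  have hf0 : f 0 = 1 := by simp [hf]
  have hshift : HasSum (fun n => f (n+1)) (-1) := by
    rw [hasSum_nat_add_iff 1]
    simpa [hf0] using hzero'
  set g : ℕ → ℂ := fun n => (-1:ℂ)^n * w^n * ∏ i ∈ Finset.Icc 2 (n+1), r i with hg
  have hfg : ∀ n, f (n+1) = (-(w * r 1)) * g n := by
    intro n
    have hins : Finset.Icc 1 (n+1) = insert 1 (Finset.Icc 2 (n+1)) := by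
      ext x; simp only [Finset.mem_Icc, Finset.mem_insert]; omega
    have hnotmem : (1:ℕ) ∉ Finset.Icc 2 (n+1) := by simp
    rw [hf, hg]
    simp only []
    rw [hins, Finset.prod_insert hnotmem, pow_succ, pow_succ]
    ring
  have hcne : (-(w * r 1)) ≠ 0 := by
    simp only [neg_ne_zero]
    exact mul_ne_zero hwne hr1ne
  have hgsum : HasSum g ((-(w * r 1))⁻¹ * (-1)) := by
    have h2 : HasSum (fun n => (-(w * r 1)) * g n) (-1) := by
      have := hshift
      simp only [hfg] at this
      exact this
    have h3 := h2.mul_left (-(w * r 1))⁻¹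
    simp only [← mul_assoc, inv_mul_cancel₀ hcne, one_mul] at h3
    exact h3
  have hg0 : g 0 = 1 := by simp [hg]
  set T : ℂ := (-(w * r 1))⁻¹ * (-1) with hT
  have hgshift : HasSum (fun n => g (n+1)) (T - 1) := by
    rw [hasSum_nat_add_iff 1]
    have : T - 1 + ∑ i ∈ Finset.range 1, g i = T := by simp [hg0]
    rw [this]
    exact hgsum
  -- bound the tail
  have hb : ∀ n : ℕ, ‖g (n+1)‖ ≤ E * (1/40) ^ n := by
    intro n
    have hins2 : Finset.Icc 2 (n+2) = insert 2 (Finset.Icc 3 (n+2)) := by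
      ext x; simp only [Finset.mem_Icc, Finset.mem_insert]; omega
    have hnotmem2 : (2:ℕ) ∉ Finset.Icc 3 (n+2) := by simp
    have hcard : (Finset.Icc 3 (n+2)).card = n := by
      rw [Nat.card_Icc]; omega
    have hprod : ∏ i ∈ Finset.Icc 3 (n+2), ‖r i‖ ≤ (1/40 : ℝ) ^ n := by
      calc ∏ i ∈ Finset.Icc 3 (n+2), ‖r i‖ ≤ ∏ i ∈ Finset.Icc 3 (n+2), (1/40 : ℝ) := by
            refine Finset.prod_le_prod (fun i _ => norm_nonneg _) ?_
            intro i hi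
            exact hr3 i (Finset.mem_Icc.mp hi).1
        _ = (1/40 : ℝ) ^ n := by rw [Finset.prod_const, hcard]
    have hgn : ‖g (n+1)‖ = ∏ i ∈ Finset.Icc 2 (n+2), ‖r i‖ := by
      rw [hg]
      simp only []
      rw [norm_mul, norm_mul, norm_pow, norm_pow, hwnorm, norm_neg, norm_one,
        one_pow, one_mul, one_mul, norm_prod]
    rw [hgn, hins2, Finset.prod_insert hnotmem2]
    have hpn : (0:ℝ) ≤ ∏ i ∈ Finset.Icc 3 (n+2), ‖r i‖ :=
      Finset.prod_nonneg (fun i _ => norm_nonneg _)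
    exact mul_le_mul hr2 hprod hpn hEpos.le
  have hgeo : HasSum (fun n : ℕ => E * (1/40) ^ n) (E * (1 - 1/40)⁻¹) := by
    exact (hasSum_geometric_of_lt_one (by norm_num) (by norm_num)).mul_left E
  have hTbound : ‖T - 1‖ ≤ E * (40/39) := by
    have h1 := tsum_of_norm_bounded hgeo hb
    rw [hgshift.tsum_eq] at h1
    have h2 : E * (1 - 1/40 : ℝ)⁻¹ = E * (40/39) := by norm_num
    linarith [h1, h2.le]
  -- identify T
  have hTeq : T - 1 = (z₀ - 1 - w) / w := by
    rw [hT, hr1, hq]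
    field_simp [hwne]
  have hnear : ‖z₀ - (1 + w)‖ ≤ E * (40/39) := by
    have h1 : ‖T - 1‖ = ‖z₀ - (1 + w)‖ := by
      rw [hTeq, norm_div, hwnorm, div_one]
      congr 1
      ring
    linarith [hTbound, h1.symm.le, h1.le]
  have hzle : ‖z₀‖ ≤ ‖1 + w‖ + E * (40/39) := by
    have h1 : z₀ = (1 + w) + (z₀ - (1 + w)) := by ring
    calc ‖z₀‖ = ‖(1 + w) + (z₀ - (1 + w))‖ := by rw [← h1]
      _ ≤ ‖1 + w‖ + ‖z₀ - (1 + w)‖ := norm_add_le _ _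
      _ ≤ ‖1 + w‖ + E * (40/39) := add_le_add_right hnear _
  -- trigonometric estimates
  have hπl : (3.14:ℝ) ≤ Real.pi := Real.pi_gt_d2.le
  have hπu : Real.pi ≤ 3.15 := Real.pi_lt_d2.le
  set φ₀ : ℝ := Real.sqrt (97/96) * Real.pi * 2 ^ (-(t : ℝ)/2) with hφ₀
  have hφ0pos : 0 < φ₀ := by
    rw [hφ₀]
    have h1 : 0 < Real.sqrt (97/96) := Real.sqrt_pos.2 (by norm_num)
    have h2 : (0:ℝ) < 2 ^ (-(t : ℝ)/2) := Real.rpow_pos_of_pos (by norm_num) _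
    positivity
  have hφ0sq : φ₀^2 = (97/96) * Real.pi^2 * E := by
    rw [hφ₀, mul_pow, mul_pow, Real.sq_sqrt (by norm_num : (0:ℝ) ≤ 97/96)]
    have h1 : ((2:ℝ) ^ (-(t : ℝ)/2))^2 = E := by
      rw [← Real.rpow_natCast ((2:ℝ) ^ (-(t : ℝ)/2)) 2, ← Real.rpow_mul (by norm_num)]
      have h2 : (-(t : ℝ)/2) * (2:ℕ) = -(t:ℝ) := by push_cast; ring
      rw [h2, Real.rpow_neg (by norm_num), Real.rpow_natCast, hE, one_div]
    rw [h1]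
  have hφ0le : φ₀ ≤ 1.6 := by
    refine aux_le_of_sq_le _ _ hφ0pos.le (by norm_num) ?_
    rw [hφ0sq]
    calc (97/96) * Real.pi^2 * E ≤ 2.56 := aux_phi_sq_le E Real.pi hEpos hE4 hπl hπu
      _ = (1.6:ℝ)^2 := by norm_num
  have hcosmono : Real.cos φ ≤ Real.cos φ₀ := by
    rw [← Real.cos_abs φ]
    exact Real.cos_le_cos_of_nonneg_of_le_pi hφ0pos.le hup hlow.le
  have hnw2 : ‖1 + w‖^2 = 2 + 2 * Real.cos φ := by
    rw [Complex.sq_norm, Complex.normSq_apply]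
    have hre : (1 + w).re = 1 + Real.cos φ := by
      rw [hw, Complex.add_re, Complex.one_re, Complex.exp_ofReal_mul_I_re]
    have him : (1 + w).im = Real.sin φ := by
      rw [hw, Complex.add_im, Complex.one_im, Complex.exp_ofReal_mul_I_im, zero_add]
    rw [hre, him]
    linear_combination Real.sin_sq_add_cos_sq φ
  have hMbound : Real.cos (φ₀/2) ≤ 1 - (φ₀/2)^2/2 + (φ₀/2)^4 * (5/96) := by
    have h1 : |φ₀/2| ≤ 1 := by
      rw [abs_of_pos (by linarith)]
      linarith
    have h2 := Real.cos_bound h1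
    rw [abs_of_pos (by linarith : (0:ℝ) < φ₀/2)] at h2
    have h3 := (abs_le.mp h2).2
    linarith
  have hc0 : 0 ≤ Real.cos (φ₀/2) := by
    apply Real.cos_nonneg_of_mem_Icc
    constructor
    · linarith
    · linarith
  have hcossq : Real.cos (φ₀/2)^2 = 1/2 + Real.cos φ₀ / 2 := by
    have := Real.cos_sq (φ₀/2)
    have h2 : 2 * (φ₀/2) = φ₀ := by ring
    rw [h2] at this
    exact this
  set M : ℝ := 1 - (φ₀/2)^2/2 + (φ₀/2)^4 * (5/96) with hM
  have hM0 : 0 ≤ M := le_trans hc0 hMbound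
  have h1w : ‖1 + w‖ ≤ 2 * M := by
    have hcsq : Real.cos (φ₀/2)^2 ≤ M^2 := pow_le_pow_left₀ hc0 hMbound 2
    have hsq : ‖1 + w‖^2 ≤ (2*M)^2 := by
      calc ‖1 + w‖^2 = 2 + 2 * Real.cos φ := hnw2
        _ ≤ 2 + 2 * Real.cos φ₀ :=
            add_le_add_right (mul_le_mul_of_nonneg_left hcosmono (by norm_num)) 2
        _ = 4 * Real.cos (φ₀/2)^2 := by rw [hcossq]; ring
        _ ≤ 4 * M^2 := mul_le_mul_of_nonneg_left hcsq (by norm_num)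
        _ = (2*M)^2 := by ring
    exact aux_le_of_sq_le _ _ (norm_nonneg _) (by linarith) hsq
  -- final numeric contradiction
  have hMval : M = 1 - φ₀^2/8 + φ₀^4 * (5/1536) := by rw [hM]; ring
  have hφ4 : φ₀^4 = ((97/96) * Real.pi^2 * E)^2 := by rw [← hφ0sq]; ring
  have hfin : 2 * M + E * (40/39) < 2 - E := by
    rw [hMval, hφ0sq, hφ4]
    linarith [aux_final E Real.pi hEpos hE4 hπl hπu]
  have c1 : 2 - E ≤ ‖1 + w‖ + E * (40/39) := hcon.trans hzle
  have c2 : ‖1 + w‖ + E * (40/39) ≤ 2 * M + E * (40/39) := add_le_add_left h1w _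
  exact lt_irrefl (2 - E) (lt_of_le_of_lt (c1.trans c2) hfin)



end
end

section
/- Fix an integer t ≥ 5 and set D(q,w) = 1 − b(q,1,1,w) = Σ_{j≥0} (−1)^j w^j ∏_{i=1}^{j} q^{h_i}/(1−q^{h_i}). For every w ∈ ℂ with |w − 1| ≤ 1/2 − 5·(2/3)^t, the function q ↦ D(q,w) has exactly one zero in the open disc |q| < 2/3 and no zero on the circle |q| = 2/3. -/
open scoped BigOperators
open Filter MeasureTheory

noncomputable section

/-- the denominator `D(q,w) = 1 − b(q,1,1,w) = Σ_{j≥0} (−1)^j w^j ∏_{i=1}^{j} q^{h_i}/(1−q^{h_i})` -/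
def DGF (t : ℕ) (q w : ℂ) : ℂ :=
  ∑' j : ℕ, (-1 : ℂ) ^ j * w ^ j * ∏ i ∈ Finset.Icc 1 j, q ^ hp t i / (1 - q ^ hp t i)

namespace DenomProofAux

open Finset

variable {t : ℕ}

lemma hp_one (t : ℕ) : hp t 1 = 1 := by simp [hp]

lemma hp_two (t : ℕ) : hp t 2 = 1 + t := by
  simp [hp, Finset.sum_range_succ]

lemma hp_three (t : ℕ) : hp t 3 = 1 + t + t ^ 2 := by
  simp [hp, Finset.sum_range_succ]

lemma hp_mono (t : ℕ) : Monotone (hp t) := fun _ _ hab =>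
  Finset.sum_le_sum_of_subset (Finset.range_subset_range.2 hab)

lemma hp_one_le {i : ℕ} (hi : 1 ≤ i) : 1 ≤ hp t i := by
  have h := hp_mono t hi; rwa [hp_one] at h

lemma hp_ge_two (ht : 6 ≤ t) {i : ℕ} (hi : 2 ≤ i) : 7 ≤ hp t i := by
  have h := hp_mono t hi; rw [hp_two] at h; omega

lemma hp_ge_three (ht : 6 ≤ t) {i : ℕ} (hi : 3 ≤ i) : 43 ≤ hp t i := by
  have h := hp_mono t hi; rw [hp_three] at h; nlinarith

lemma norm_q_pow_le {q : ℂ} (hq : ‖q‖ ≤ 2/3) (n : ℕ) : ‖q ^ n‖ ≤ (2/3 : ℝ) ^ n := by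
  rw [norm_pow]; exact pow_le_pow_left₀ (norm_nonneg q) hq n

lemma norm_one_sub_ge {z : ℂ} {c : ℝ} (h : ‖z‖ ≤ c) : 1 - c ≤ ‖1 - z‖ := by
  have h1 : ‖(1:ℂ)‖ - ‖z‖ ≤ ‖1 - z‖ := norm_sub_norm_le 1 z
  simp only [norm_one] at h1
  linarith

lemma pow23_le {n m : ℕ} (h : m ≤ n) : ((2:ℝ)/3) ^ n ≤ (2/3) ^ m :=
  pow_le_pow_of_le_one (by norm_num) (by norm_num) h

/-- the factor `q^{h_i}/(1-q^{h_i})` -/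
def gg (t : ℕ) (q : ℂ) (i : ℕ) : ℂ := q ^ hp t i / (1 - q ^ hp t i)

lemma denom_ge_one {q : ℂ} (hq : ‖q‖ ≤ 2/3) {i : ℕ} (hi : 1 ≤ i) :
    (1:ℝ)/3 ≤ ‖1 - q ^ hp t i‖ := by
  have h1 : ‖q ^ hp t i‖ ≤ 2/3 := by
    have h2 := norm_q_pow_le hq (hp t i)
    have h3 : ((2:ℝ)/3) ^ hp t i ≤ (2/3) ^ 1 := pow23_le (hp_one_le hi)
    rw [pow_one] at h3; linarith
  have := norm_one_sub_ge h1; linarith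

lemma denom_ge_two (ht : 6 ≤ t) {q : ℂ} (hq : ‖q‖ ≤ 2/3) {i : ℕ} (hi : 2 ≤ i) :
    (14:ℝ)/15 ≤ ‖1 - q ^ hp t i‖ := by
  have h1 : ‖q ^ hp t i‖ ≤ 1/15 := by
    have h2 := norm_q_pow_le hq (hp t i)
    have h3 : ((2:ℝ)/3) ^ hp t i ≤ (2/3) ^ 7 := pow23_le (hp_ge_two ht hi)
    have h4 : ((2:ℝ)/3) ^ 7 ≤ 1/15 := by norm_num
    linarith
  have := norm_one_sub_ge h1; linarith

lemma denom_ne {q : ℂ} (hq : ‖q‖ ≤ 2/3) {i : ℕ} (hi : 1 ≤ i) :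
    (1 : ℂ) - q ^ hp t i ≠ 0 := by
  intro h
  have h2 := denom_ge_one (t := t) hq hi
  rw [h, norm_zero] at h2; linarith

lemma gg_norm_le' (ht : 6 ≤ t) {q : ℂ} (hq : ‖q‖ ≤ 2/3) {i : ℕ} (hi : 2 ≤ i) :
    ‖gg t q i‖ ≤ (15/14) * (2/3:ℝ) ^ hp t i := by
  rw [gg, norm_div]
  have hd := denom_ge_two ht hq hi
  have hn : ‖q ^ hp t i‖ ≤ (2/3:ℝ) ^ hp t i := norm_q_pow_le hq _
  calc ‖q ^ hp t i‖ / ‖1 - q ^ hp t i‖ ≤ (2/3:ℝ) ^ hp t i / (14/15) :=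
        div_le_div₀ (by positivity) hn (by norm_num) hd
    _ = (15/14) * (2/3) ^ hp t i := by ring

lemma gg_norm_le (ht : 6 ≤ t) {q : ℂ} (hq : ‖q‖ ≤ 2/3) {i : ℕ} (hi : 2 ≤ i) :
    ‖gg t q i‖ ≤ 1/14 := by
  calc ‖gg t q i‖ ≤ (15/14) * (2/3:ℝ) ^ hp t i := gg_norm_le' ht hq hi
    _ ≤ (15/14) * (2/3) ^ 7 :=
        mul_le_mul_of_nonneg_left (pow23_le (hp_ge_two ht hi)) (by norm_num)
    _ ≤ 1/14 := by norm_num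

lemma gg2_norm_le (ht : 6 ≤ t) {q : ℂ} (hq : ‖q‖ ≤ 2/3) :
    ‖gg t q 2‖ ≤ (5/7) * (2/3:ℝ) ^ t := by
  have h := gg_norm_le' ht hq (le_refl 2)
  rw [hp_two] at h
  calc ‖gg t q 2‖ ≤ (15/14) * (2/3:ℝ) ^ (1 + t) := h
    _ = (5/7) * (2/3) ^ t := by rw [pow_add, pow_one]; ring

lemma pow_lip {x y : ℂ} (hx : ‖x‖ ≤ 2/3) (hy : ‖y‖ ≤ 2/3) (n : ℕ) :
    ‖x ^ n - y ^ n‖ ≤ (n : ℝ) * (2/3) ^ (n - 1) * ‖x - y‖ := by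
  rw [← geom_sum₂_mul x y n, norm_mul]
  have hsum : ‖∑ i ∈ range n, x ^ i * y ^ (n - 1 - i)‖ ≤ (n : ℝ) * (2/3) ^ (n - 1) := by
    calc ‖∑ i ∈ range n, x ^ i * y ^ (n - 1 - i)‖
        ≤ ∑ i ∈ range n, ‖x ^ i * y ^ (n - 1 - i)‖ := norm_sum_le _ _
      _ ≤ ∑ _i ∈ range n, (2/3:ℝ) ^ (n - 1) := by
          apply Finset.sum_le_sum
          intro i hi
          rw [norm_mul]
          have h1 : ‖x ^ i‖ ≤ (2/3:ℝ) ^ i := norm_q_pow_le hx i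
          have h2 : ‖y ^ (n - 1 - i)‖ ≤ (2/3:ℝ) ^ (n - 1 - i) := norm_q_pow_le hy _
          have h3 : (2/3:ℝ) ^ i * (2/3) ^ (n - 1 - i) = (2/3) ^ (n - 1) := by
            rw [← pow_add]; congr 1
            have := Finset.mem_range.1 hi; omega
          calc ‖x ^ i‖ * ‖y ^ (n - 1 - i)‖ ≤ (2/3:ℝ) ^ i * (2/3) ^ (n - 1 - i) :=
                mul_le_mul h1 h2 (norm_nonneg _) (by positivity)
            _ = _ := h3
      _ = (n : ℝ) * (2/3) ^ (n - 1) := by rw [Finset.sum_const, card_range, nsmul_eq_mul]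
  exact mul_le_mul_of_nonneg_right hsum (norm_nonneg _)

lemma gg_sub_eq {q q' : ℂ} (hq : ‖q‖ ≤ 2/3) (hq' : ‖q'‖ ≤ 2/3) {i : ℕ} (hi : 1 ≤ i) :
    gg t q i - gg t q' i
      = (q ^ hp t i - q' ^ hp t i) / ((1 - q ^ hp t i) * (1 - q' ^ hp t i)) := by
  have h1 := denom_ne (t := t) hq hi
  have h2 := denom_ne (t := t) hq' hi
  rw [gg, gg]
  field_simp
  ring

lemma gg_lip (ht : 6 ≤ t) {q q' : ℂ} (hq : ‖q‖ ≤ 2/3) (hq' : ‖q'‖ ≤ 2/3) {i : ℕ}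
    (hi : 2 ≤ i) :
    ‖gg t q i - gg t q' i‖
      ≤ (225/196) * ((hp t i : ℝ) * (2/3) ^ (hp t i - 1)) * ‖q - q'‖ := by
  rw [gg_sub_eq hq hq' (by omega), norm_div, norm_mul]
  have hd1 := denom_ge_two ht hq hi
  have hd2 := denom_ge_two ht hq' hi
  have hnum := pow_lip hq hq' (hp t i)
  have hdd : (14/15 : ℝ) * (14/15) ≤ ‖1 - q ^ hp t i‖ * ‖1 - q' ^ hp t i‖ :=
    mul_le_mul hd1 hd2 (by norm_num) (by linarith)
  calc ‖q ^ hp t i - q' ^ hp t i‖ / (‖1 - q ^ hp t i‖ * ‖1 - q' ^ hp t i‖)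
      ≤ ((hp t i : ℝ) * (2/3) ^ (hp t i - 1) * ‖q - q'‖) / ((14/15) * (14/15)) :=
        div_le_div₀ (by positivity) hnum (by norm_num) hdd
    _ = (225/196) * ((hp t i : ℝ) * (2/3) ^ (hp t i - 1)) * ‖q - q'‖ := by ring

lemma decay (m n : ℕ) (hm : 2 ≤ m) (h : m ≤ n) :
    (n : ℝ) * (2/3) ^ n ≤ (m : ℝ) * (2/3) ^ m := by
  obtain ⟨k, rfl⟩ := Nat.exists_eq_add_of_le h
  have hber : 1 + (k : ℝ) * (1/2) ≤ (3/2) ^ k := by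
    have h1 := one_add_mul_le_pow (show (-2:ℝ) ≤ 1/2 by norm_num) k
    norm_num at h1
    linarith
  have hmk : ((m : ℝ) + k) * (2/3) ^ k ≤ m := by
    have hm2 : (2:ℝ) ≤ m := by exact_mod_cast hm
    have hk : ((m : ℝ) + k) ≤ m * (3/2) ^ k := by nlinarith [hber]
    have hmul : ((3:ℝ)/2) ^ k * (2/3) ^ k = 1 := by rw [← mul_pow]; norm_num
    calc ((m : ℝ) + k) * (2/3) ^ k ≤ (m * (3/2) ^ k) * (2/3) ^ k :=
          mul_le_mul_of_nonneg_right hk (by positivity)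
      _ = m * ((3/2) ^ k * (2/3) ^ k) := by ring
      _ = m := by rw [hmul, mul_one]
  calc ((m + k : ℕ) : ℝ) * (2/3) ^ (m + k) = (((m : ℝ) + k) * (2/3) ^ k) * (2/3) ^ m := by
        push_cast; rw [pow_add]; ring
    _ ≤ (m : ℝ) * (2/3) ^ m := mul_le_mul_of_nonneg_right hmk (by positivity)

lemma nfac_le (m n : ℕ) (hm : 2 ≤ m) (h : m ≤ n) :
    (n : ℝ) * (2/3) ^ (n - 1) ≤ (3/2) * ((m : ℝ) * (2/3) ^ m) := by
  have hn1 : n - 1 + 1 = n := by omega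
  have h2 : (2/3:ℝ) ^ n = (2/3) ^ (n - 1) * (2/3) := by rw [← pow_succ, hn1]
  have h3 : (n : ℝ) * (2/3) ^ (n - 1) = (3/2) * ((n : ℝ) * (2/3) ^ n) := by
    rw [h2]; ring
  rw [h3]
  have := decay m n hm h
  linarith

lemma gg2_lip (ht : 6 ≤ t) {q q' : ℂ} (hq : ‖q‖ ≤ 2/3) (hq' : ‖q'‖ ≤ 2/3) :
    ‖gg t q 2 - gg t q' 2‖ ≤ (71/100) * ‖q - q'‖ := by
  have h := gg_lip ht hq hq' (le_refl 2)
  have h2 : ((hp t 2 : ℝ)) * (2/3) ^ (hp t 2 - 1) ≤ (3/2) * (7 * (2/3) ^ 7) := by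
    have h3 := nfac_le 7 (hp t 2) (by norm_num) (hp_ge_two ht (le_refl 2))
    push_cast at h3
    linarith
  have hc : (225/196 : ℝ) * ((3/2) * (7 * (2/3) ^ 7)) ≤ 71/100 := by norm_num
  calc ‖gg t q 2 - gg t q' 2‖
      ≤ (225/196) * ((hp t 2 : ℝ) * (2/3) ^ (hp t 2 - 1)) * ‖q - q'‖ := h
    _ ≤ (71/100) * ‖q - q'‖ := by
        apply mul_le_mul_of_nonneg_right _ (norm_nonneg _)
        calc (225/196 : ℝ) * ((hp t 2 : ℝ) * (2/3) ^ (hp t 2 - 1))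
            ≤ (225/196) * ((3/2) * (7 * (2/3) ^ 7)) :=
              mul_le_mul_of_nonneg_left h2 (by norm_num)
          _ ≤ 71/100 := hc

lemma gg_lip_small (ht : 6 ≤ t) {q q' : ℂ} (hq : ‖q‖ ≤ 2/3) (hq' : ‖q'‖ ≤ 2/3) {i : ℕ}
    (hi : 3 ≤ i) :
    ‖gg t q i - gg t q' i‖ ≤ (1/500) * ‖q - q'‖ := by
  have h := gg_lip ht hq hq' (by omega : 2 ≤ i)
  have h2 : ((hp t i : ℝ)) * (2/3) ^ (hp t i - 1) ≤ (3/2) * (43 * (2/3) ^ 43) := by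
    have h3 := nfac_le 43 (hp t i) (by norm_num) (hp_ge_three ht hi)
    push_cast at h3
    linarith
  have hc : (225/196 : ℝ) * ((3/2) * (43 * (2/3) ^ 43)) ≤ 1/500 := by norm_num
  calc ‖gg t q i - gg t q' i‖
      ≤ (225/196) * ((hp t i : ℝ) * (2/3) ^ (hp t i - 1)) * ‖q - q'‖ := h
    _ ≤ (1/500) * ‖q - q'‖ := by
        apply mul_le_mul_of_nonneg_right _ (norm_nonneg _)
        calc (225/196 : ℝ) * ((hp t i : ℝ) * (2/3) ^ (hp t i - 1))
            ≤ (225/196) * ((3/2) * (43 * (2/3) ^ 43)) :=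
              mul_le_mul_of_nonneg_left h2 (by norm_num)
          _ ≤ 1/500 := hc

/-- the terms of the series `E` -/
def tE (t : ℕ) (w q : ℂ) (j : ℕ) : ℂ :=
  (-1) ^ j * w ^ j * ∏ k ∈ Finset.range j, gg t q (k + 2)

/-- the series `E(q,w)` with `D(q,w) = 1 - w·(q/(1-q))·E(q,w)` -/
def Efun (t : ℕ) (w q : ℂ) : ℂ := ∑' j, tE t w q j

variable {w : ℂ}

lemma prodE_norm (ht : 6 ≤ t) {q : ℂ} (hq : ‖q‖ ≤ 2/3) (j : ℕ) :
    ‖∏ k ∈ range j, gg t q (k + 2)‖ ≤ (1/14 : ℝ) ^ j := by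
  rw [norm_prod]
  calc ∏ k ∈ range j, ‖gg t q (k + 2)‖ ≤ ∏ _k ∈ range j, (1/14 : ℝ) :=
      Finset.prod_le_prod (fun _ _ => norm_nonneg _)
        (fun k _ => gg_norm_le ht hq (by omega))
    _ = (1/14) ^ j := by rw [prod_const, card_range]

lemma tE_norm (ht : 6 ≤ t) {q : ℂ} (hq : ‖q‖ ≤ 2/3) (hw : ‖w‖ ≤ 3/2) (j : ℕ) :
    ‖tE t w q j‖ ≤ (3/28 : ℝ) ^ j := by
  rw [tE, norm_mul, norm_mul, norm_pow, norm_pow, norm_neg, norm_one, one_pow, one_mul]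
  calc ‖w‖ ^ j * ‖∏ k ∈ range j, gg t q (k + 2)‖ ≤ (3/2 : ℝ) ^ j * (1/14) ^ j :=
      mul_le_mul (pow_le_pow_left₀ (norm_nonneg w) hw j) (prodE_norm ht hq j)
        (norm_nonneg _) (by positivity)
    _ = (3/28) ^ j := by rw [← mul_pow]; norm_num

lemma tE_summable (ht : 6 ≤ t) {q : ℂ} (hq : ‖q‖ ≤ 2/3) (hw : ‖w‖ ≤ 3/2) :
    Summable (tE t w q) :=
  Summable.of_norm_bounded (summable_geometric_of_lt_one (by norm_num) (by norm_num))
    (tE_norm ht hq hw)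

lemma tE_succ_norm (ht : 6 ≤ t) {q : ℂ} (hq : ‖q‖ ≤ 2/3) (hw : ‖w‖ ≤ 3/2) (j : ℕ) :
    ‖tE t w q (j + 1)‖ ≤ ((3/2) * ((5/7) * (2/3 : ℝ) ^ t)) * (3/28) ^ j := by
  rw [tE, norm_mul, norm_mul, norm_pow, norm_pow, norm_neg, norm_one, one_pow, one_mul]
  have hprod : ‖∏ k ∈ range (j + 1), gg t q (k + 2)‖ ≤ ((5/7) * (2/3 : ℝ) ^ t) * (1/14) ^ j := by
    rw [Finset.prod_range_succ', norm_mul]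
    have h1 : ‖∏ k ∈ range j, gg t q (k + 1 + 2)‖ ≤ (1/14 : ℝ) ^ j := by
      rw [norm_prod]
      calc ∏ k ∈ range j, ‖gg t q (k + 1 + 2)‖ ≤ ∏ _k ∈ range j, (1/14 : ℝ) :=
          Finset.prod_le_prod (fun _ _ => norm_nonneg _)
            (fun k _ => gg_norm_le ht hq (by omega))
        _ = (1/14) ^ j := by rw [prod_const, card_range]
    have h2 : ‖gg t q (0 + 2)‖ ≤ (5/7) * (2/3 : ℝ) ^ t := by
      simpa using gg2_norm_le ht hq
    calc ‖∏ k ∈ range j, gg t q (k + 1 + 2)‖ * ‖gg t q (0 + 2)‖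
        ≤ (1/14 : ℝ) ^ j * ((5/7) * (2/3) ^ t) :=
          mul_le_mul h1 h2 (norm_nonneg _) (by positivity)
      _ = ((5/7) * (2/3 : ℝ) ^ t) * (1/14) ^ j := by ring
  have hw' : ‖w‖ ^ (j + 1) ≤ (3/2 : ℝ) ^ (j + 1) := pow_le_pow_left₀ (norm_nonneg w) hw _
  calc ‖w‖ ^ (j + 1) * ‖∏ k ∈ range (j + 1), gg t q (k + 2)‖
      ≤ (3/2 : ℝ) ^ (j + 1) * (((5/7) * (2/3) ^ t) * (1/14) ^ j) :=
        mul_le_mul hw' hprod (norm_nonneg _) (by positivity)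
    _ = ((3/2) * ((5/7) * (2/3 : ℝ) ^ t)) * (3/28) ^ j := by
        rw [pow_succ, show (3/28 : ℝ) = (3/2) * (1/14) by norm_num, mul_pow]
        ring

lemma Efun_sub_one (ht : 6 ≤ t) {q : ℂ} (hq : ‖q‖ ≤ 2/3) (hw : ‖w‖ ≤ 3/2) :
    ‖Efun t w q - 1‖ ≤ (6/5) * (2/3 : ℝ) ^ t := by
  have hs := tE_summable ht hq hw
  have h0 : tE t w q 0 = 1 := by simp [tE]
  have heq : Efun t w q - 1 = ∑' j, tE t w q (j + 1) := by
    rw [Efun, Summable.tsum_eq_zero_add hs, h0]; ring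
  rw [heq]
  have hgs : HasSum (fun j : ℕ => ((3/2) * ((5/7) * (2/3 : ℝ) ^ t)) * (3/28) ^ j)
      (((3/2) * ((5/7) * (2/3 : ℝ) ^ t)) * (1 - 3/28)⁻¹) :=
    (hasSum_geometric_of_lt_one (by norm_num) (by norm_num)).mul_left _
  have hb := tsum_of_norm_bounded hgs (tE_succ_norm ht hq hw)
  calc ‖∑' j, tE t w q (j + 1)‖ ≤ ((3/2) * ((5/7) * (2/3 : ℝ) ^ t)) * (1 - 3/28)⁻¹ := hb
    _ = (6/5) * (2/3 : ℝ) ^ t := by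
        rw [show ((1 : ℝ) - 3/28)⁻¹ = 28/25 by norm_num]; ring

lemma prod_diff_le (M : ℝ) (hM : 0 ≤ M) (f g : ℕ → ℂ) :
    ∀ n, (∀ k, k < n → ‖f k‖ ≤ M) → (∀ k, k < n → ‖g k‖ ≤ M) →
      ‖(∏ k ∈ range n, f k) - ∏ k ∈ range n, g k‖
        ≤ ∑ k ∈ range n, M ^ (n - 1) * ‖f k - g k‖ := by
  intro n
  induction n with
  | zero => intro _ _; simp
  | succ n ih =>
    intro hf hg
    have hfn : ∀ k, k < n → ‖f k‖ ≤ M := fun k hk => hf k (by omega)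
    have hgn : ∀ k, k < n → ‖g k‖ ≤ M := fun k hk => hg k (by omega)
    have hprodg : ‖∏ k ∈ range n, g k‖ ≤ M ^ n := by
      rw [norm_prod]
      calc ∏ k ∈ range n, ‖g k‖ ≤ ∏ _k ∈ range n, M :=
          Finset.prod_le_prod (fun _ _ => norm_nonneg _)
            (fun k hk => hgn k (mem_range.1 hk))
        _ = M ^ n := by rw [prod_const, card_range]
    have key : (∏ k ∈ range (n + 1), f k) - ∏ k ∈ range (n + 1), g k
        = f n * ((∏ k ∈ range n, f k) - ∏ k ∈ range n, g k)
            + (f n - g n) * ∏ k ∈ range n, g k := by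
      rw [prod_range_succ, prod_range_succ]; ring
    rw [key]
    calc ‖f n * ((∏ k ∈ range n, f k) - ∏ k ∈ range n, g k)
            + (f n - g n) * ∏ k ∈ range n, g k‖
        ≤ ‖f n‖ * ‖(∏ k ∈ range n, f k) - ∏ k ∈ range n, g k‖
            + ‖f n - g n‖ * ‖∏ k ∈ range n, g k‖ := by
          refine le_trans (norm_add_le _ _) ?_
          rw [norm_mul, norm_mul]
      _ ≤ M * (∑ k ∈ range n, M ^ (n - 1) * ‖f k - g k‖) + ‖f n - g n‖ * M ^ n := by
          apply add_le_add
          · exact mul_le_mul (hf n (by omega)) (ih hfn hgn) (norm_nonneg _) hM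
          · exact mul_le_mul_of_nonneg_left hprodg (norm_nonneg _)
      _ ≤ (∑ k ∈ range n, M ^ n * ‖f k - g k‖) + M ^ n * ‖f n - g n‖ := by
          apply add_le_add
          · rw [Finset.mul_sum]
            apply Finset.sum_le_sum
            intro k hk
            have hk' : k < n := mem_range.1 hk
            have hn1 : n - 1 + 1 = n := by omega
            have hMM : M * M ^ (n - 1) = M ^ n := by
              rw [← pow_succ', hn1]
            have heq : M * (M ^ (n - 1) * ‖f k - g k‖) = M ^ n * ‖f k - g k‖ := by
              rw [← hMM]; ring
            exact le_of_eq heq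
          · rw [mul_comm]
      _ = ∑ k ∈ range (n + 1), M ^ (n + 1 - 1) * ‖f k - g k‖ := by
          rw [Finset.sum_range_succ]
          simp

lemma tE_diff (ht : 6 ≤ t) {q q' : ℂ} (hq : ‖q‖ ≤ 2/3) (hq' : ‖q'‖ ≤ 2/3)
    (hw : ‖w‖ ≤ 3/2) (j : ℕ) :
    ‖tE t w q (j + 1) - tE t w q' (j + 1)‖ ≤ ((213/200) * (87/784 : ℝ) ^ j) * ‖q - q'‖ := by
  have key : tE t w q (j + 1) - tE t w q' (j + 1)
      = (-1) ^ (j + 1) * w ^ (j + 1)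
          * ((∏ k ∈ range (j + 1), gg t q (k + 2)) - ∏ k ∈ range (j + 1), gg t q' (k + 2)) := by
    rw [tE, tE]; ring
  rw [key, norm_mul, norm_mul, norm_pow, norm_pow, norm_neg, norm_one, one_pow, one_mul]
  have h1 := prod_diff_le (1/14) (by norm_num) (fun k => gg t q (k + 2))
    (fun k => gg t q' (k + 2)) (j + 1)
    (fun k _ => gg_norm_le ht hq (by omega)) (fun k _ => gg_norm_le ht hq' (by omega))
  have hsum : ∑ k ∈ range (j + 1), (1/14 : ℝ) ^ (j + 1 - 1) * ‖gg t q (k + 2) - gg t q' (k + 2)‖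
      ≤ (1/14) ^ j * ((71/100 + (j : ℝ) * (1/500)) * ‖q - q'‖) := by
    have hj : j + 1 - 1 = j := rfl
    rw [hj, Finset.sum_range_succ']
    have hterm : ∀ k, k < j →
        (1/14 : ℝ) ^ j * ‖gg t q (k + 1 + 2) - gg t q' (k + 1 + 2)‖
          ≤ (1/14) ^ j * ((1/500) * ‖q - q'‖) := by
      intro k _
      exact mul_le_mul_of_nonneg_left (gg_lip_small ht hq hq' (by omega)) (by positivity)
    have hsum1 : ∑ k ∈ range j, (1/14 : ℝ) ^ j * ‖gg t q (k + 1 + 2) - gg t q' (k + 1 + 2)‖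
        ≤ (j : ℝ) * ((1/14) ^ j * ((1/500) * ‖q - q'‖)) := by
      calc ∑ k ∈ range j, (1/14 : ℝ) ^ j * ‖gg t q (k + 1 + 2) - gg t q' (k + 1 + 2)‖
          ≤ ∑ _k ∈ range j, (1/14 : ℝ) ^ j * ((1/500) * ‖q - q'‖) :=
            Finset.sum_le_sum (fun k hk => hterm k (mem_range.1 hk))
        _ = (j : ℝ) * ((1/14) ^ j * ((1/500) * ‖q - q'‖)) := by
            rw [Finset.sum_const, card_range, nsmul_eq_mul]
    have h0 : (1/14 : ℝ) ^ j * ‖gg t q (0 + 2) - gg t q' (0 + 2)‖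
        ≤ (1/14) ^ j * ((71/100) * ‖q - q'‖) := by
      have := gg2_lip ht hq hq'
      simp only [zero_add]
      exact mul_le_mul_of_nonneg_left this (by positivity)
    calc (∑ k ∈ range j, (1/14 : ℝ) ^ j * ‖gg t q (k + 1 + 2) - gg t q' (k + 1 + 2)‖)
          + (1/14 : ℝ) ^ j * ‖gg t q (0 + 2) - gg t q' (0 + 2)‖
        ≤ (j : ℝ) * ((1/14) ^ j * ((1/500) * ‖q - q'‖))
            + (1/14) ^ j * ((71/100) * ‖q - q'‖) := add_le_add hsum1 h0
      _ = (1/14) ^ j * ((71/100 + (j : ℝ) * (1/500)) * ‖q - q'‖) := by ring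
  have hber : (71/100 + (j : ℝ) * (1/500)) ≤ (71/100) * (29/28) ^ j := by
    have h2 := one_add_mul_le_pow (show (-2 : ℝ) ≤ 1/28 by norm_num) j
    have h3 : ((1 : ℝ) + 1/28) ^ j = (29/28) ^ j := by norm_num
    rw [h3] at h2
    nlinarith [h2]
  have hprod : ‖(∏ k ∈ range (j + 1), gg t q (k + 2)) - ∏ k ∈ range (j + 1), gg t q' (k + 2)‖
      ≤ (1/14 : ℝ) ^ j * (((71/100) * (29/28) ^ j) * ‖q - q'‖) := by
    refine le_trans h1 (le_trans hsum ?_)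
    have := mul_le_mul_of_nonneg_right hber (norm_nonneg (q - q'))
    have h4 : (0:ℝ) ≤ (1/14 : ℝ) ^ j := by positivity
    nlinarith [this, h4]
  have hw' : ‖w‖ ^ (j + 1) ≤ (3/2 : ℝ) ^ (j + 1) := pow_le_pow_left₀ (norm_nonneg w) hw _
  calc ‖w‖ ^ (j + 1)
        * ‖(∏ k ∈ range (j + 1), gg t q (k + 2)) - ∏ k ∈ range (j + 1), gg t q' (k + 2)‖
      ≤ (3/2 : ℝ) ^ (j + 1) * ((1/14) ^ j * (((71/100) * (29/28) ^ j) * ‖q - q'‖)) :=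
        mul_le_mul hw' hprod (norm_nonneg _) (by positivity)
    _ = ((213/200) * (87/784 : ℝ) ^ j) * ‖q - q'‖ := by
        rw [pow_succ, show (87/784 : ℝ) = (3/2) * ((1/14) * (29/28)) by norm_num,
          mul_pow, mul_pow]
        ring

lemma Efun_lip (ht : 6 ≤ t) {q q' : ℂ} (hq : ‖q‖ ≤ 2/3) (hq' : ‖q'‖ ≤ 2/3)
    (hw : ‖w‖ ≤ 3/2) :
    ‖Efun t w q - Efun t w q'‖ ≤ (6/5) * ‖q - q'‖ := by
  have hs := tE_summable ht hq hw
  have hs' := tE_summable ht hq' hw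
  have hdiff : Efun t w q - Efun t w q' = ∑' j, (tE t w q j - tE t w q' j) :=
    (Summable.tsum_sub hs hs').symm
  have hsd : Summable fun j => tE t w q j - tE t w q' j := hs.sub hs'
  have h0 : tE t w q 0 - tE t w q' 0 = 0 := by simp [tE]
  rw [hdiff, Summable.tsum_eq_zero_add hsd, h0, zero_add]
  have hgs : HasSum (fun j : ℕ => ((213/200) * (87/784 : ℝ) ^ j) * ‖q - q'‖)
      (((213/200) * ((1 : ℝ) - 87/784)⁻¹) * ‖q - q'‖) :=
    ((hasSum_geometric_of_lt_one (by norm_num) (by norm_num)).mul_left (213/200)).mul_right _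
  have hb := tsum_of_norm_bounded hgs (fun j => tE_diff ht hq hq' hw j)
  refine le_trans hb ?_
  have hc : (213/200 : ℝ) * ((1 : ℝ) - 87/784)⁻¹ ≤ 6/5 := by norm_num
  exact mul_le_mul_of_nonneg_right hc (norm_nonneg _)

/-- the terms of the series `D` -/
def tD (t : ℕ) (w q : ℂ) (j : ℕ) : ℂ :=
  (-1) ^ j * w ^ j * ∏ i ∈ Finset.Icc 1 j, gg t q i

lemma DGF_tsum (q : ℂ) : DGF t q w = ∑' j, tD t w q j := rfl

lemma prod_Icc_eq (f : ℕ → ℂ) (j : ℕ) :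
    ∏ i ∈ Finset.Icc 1 (j + 1), f i = f 1 * ∏ k ∈ range j, f (k + 2) := by
  rw [← Finset.Ico_add_one_right_eq_Icc, Finset.prod_Ico_eq_prod_range]
  have h1 : j + 1 + 1 - 1 = j + 1 := rfl
  rw [h1, Finset.prod_range_succ']
  simp only [show ∀ k : ℕ, 1 + (k + 1) = k + 2 from fun k => by omega, add_zero]
  rw [mul_comm]

lemma gg_one (q : ℂ) : gg t q 1 = q / (1 - q) := by rw [gg, hp_one, pow_one]

lemma tD_succ (q : ℂ) (j : ℕ) : tD t w q (j + 1) = -(w * gg t q 1) * tE t w q j := by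
  rw [tD, tE, prod_Icc_eq, pow_succ, pow_succ]
  ring

lemma gg_one_norm {q : ℂ} (hq : ‖q‖ ≤ 2/3) : ‖gg t q 1‖ ≤ 2 := by
  rw [gg_one, norm_div]
  have h13 : (1:ℝ)/3 ≤ ‖1 - q‖ := by
    have := norm_one_sub_ge hq; linarith
  calc ‖q‖ / ‖1 - q‖ ≤ (2/3) / (1/3) := div_le_div₀ (by norm_num) hq (by norm_num) h13
    _ = 2 := by norm_num

lemma tD_summable (ht : 6 ≤ t) {q : ℂ} (hq : ‖q‖ ≤ 2/3) (hw : ‖w‖ ≤ 3/2) :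
    Summable (tD t w q) := by
  apply Summable.of_norm_bounded (g := fun j => 28 * (3/28 : ℝ) ^ j)
    ((summable_geometric_of_lt_one (by norm_num) (by norm_num)).mul_left 28)
  intro j
  cases j with
  | zero => simp [tD]
  | succ j =>
    rw [tD_succ]
    calc ‖-(w * gg t q 1) * tE t w q j‖ = ‖w‖ * ‖gg t q 1‖ * ‖tE t w q j‖ := by
          rw [norm_mul, norm_neg, norm_mul]
      _ ≤ (3/2) * 2 * (3/28) ^ j := by
          apply mul_le_mul _ (tE_norm ht hq hw j) (norm_nonneg _) (by norm_num)
          exact mul_le_mul hw (gg_one_norm hq) (norm_nonneg _) (by norm_num)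
      _ = 28 * (3/28) ^ (j + 1) := by rw [pow_succ]; ring

lemma DGF_eq (ht : 6 ≤ t) {q : ℂ} (hq : ‖q‖ ≤ 2/3) (hw : ‖w‖ ≤ 3/2) :
    DGF t q w = 1 - w * (q / (1 - q)) * Efun t w q := by
  rw [DGF_tsum q, Summable.tsum_eq_zero_add (tD_summable ht hq hw)]
  have h0 : tD t w q 0 = 1 := by simp [tD]
  have h1 : ∀ j : ℕ, tD t w q (j + 1) = -(w * gg t q 1) * tE t w q j := tD_succ q
  rw [h0, tsum_congr h1, tsum_mul_left]
  simp only [Efun, gg_one]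
  ring

lemma zero_iff (ht : 6 ≤ t) {q w : ℂ} (hq : ‖q‖ ≤ 2/3) (hw : ‖w‖ ≤ 3/2) :
    DGF t q w = 0 ↔ q * (1 + w * Efun t w q) = 1 := by
  have h13 : (1:ℝ)/3 ≤ ‖1 - q‖ := by
    have := norm_one_sub_ge hq; linarith
  have h1q : (1 : ℂ) - q ≠ 0 := by
    intro h; rw [h, norm_zero] at h13; linarith
  rw [DGF_eq ht hq hw]
  have key : 1 - w * (q / (1 - q)) * Efun t w q
      = (1 - q * (1 + w * Efun t w q)) / (1 - q) := by
    field_simp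
    ring
  rw [key, div_eq_zero_iff]
  constructor
  · rintro (h | h)
    · exact (sub_eq_zero.mp h).symm
    · exact absurd h h1q
  · intro h
    left
    rw [h]; ring

end DenomProofAux


/-- For `t ≥ 5` and `|w − 1| ≤ 1/2 − 5·(2/3)^t`, the function
`q ↦ D(q,w)` has exactly one zero in the open disc `|q| < 2/3` and no zero on the
circle `|q| = 2/3`. -/
theorem unique_root_of_denominator (t : ℕ) (ht : 5 ≤ t) (w : ℂ)
    (hw : ‖w - 1‖ ≤ 1/2 - 5 * (2/3 : ℝ) ^ t) :
    (∃! q : ℂ, ‖q‖ < 2/3 ∧ DGF t q w = 0) ∧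
    ∀ q : ℂ, ‖q‖ = 2/3 → DGF t q w ≠ 0 := by
  have hεpos : (0:ℝ) < (2/3) ^ t := by positivity
  have h5ε : 5 * (2/3 : ℝ) ^ t ≤ 1/2 := by
    have := norm_nonneg (w - 1); linarith
  have ht6 : 6 ≤ t := by
    by_contra h
    have ht5 : t = 5 := by omega
    rw [ht5] at h5ε
    norm_num at h5ε
  have hwn : ‖w‖ ≤ 3/2 := by
    have h1 : ‖w‖ ≤ ‖w - 1‖ + 1 := by
      calc ‖w‖ = ‖(w - 1) + 1‖ := by ring_nf
        _ ≤ ‖w - 1‖ + ‖(1 : ℂ)‖ := norm_add_le _ _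
        _ = ‖w - 1‖ + 1 := by simp
    linarith
  -- norm bounds on φ(q) = 1 + w * E(q)
  have hφ : ∀ q : ℂ, ‖q‖ ≤ 2/3 →
      (3/2 : ℝ) + (16/5) * (2/3) ^ t ≤ ‖1 + w * DenomProofAux.Efun t w q‖ := by
    intro q hq
    have hE := DenomProofAux.Efun_sub_one ht6 hq hwn
    have h2 : ‖(1 + w * DenomProofAux.Efun t w q) - 2‖ ≤ 1/2 - (16/5) * (2/3) ^ t := by
      have heq : (1 + w * DenomProofAux.Efun t w q) - 2 = w * (DenomProofAux.Efun t w q - 1) + (w - 1) := by ring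
      rw [heq]
      calc ‖w * (DenomProofAux.Efun t w q - 1) + (w - 1)‖
          ≤ ‖w * (DenomProofAux.Efun t w q - 1)‖ + ‖w - 1‖ := norm_add_le _ _
        _ ≤ (3/2) * ((6/5) * (2/3) ^ t) + (1/2 - 5 * (2/3) ^ t) := by
            rw [norm_mul]
            exact add_le_add
              (mul_le_mul hwn hE (norm_nonneg _) (by norm_num)) hw
        _ = 1/2 - (16/5) * (2/3) ^ t := by ring
    have h4 : ‖(2 : ℂ)‖ ≤ ‖1 + w * DenomProofAux.Efun t w q‖ + ‖(1 + w * DenomProofAux.Efun t w q) - 2‖ := by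
      calc ‖(2 : ℂ)‖ = ‖(1 + w * DenomProofAux.Efun t w q) + (2 - (1 + w * DenomProofAux.Efun t w q))‖ := by ring_nf
        _ ≤ ‖1 + w * DenomProofAux.Efun t w q‖ + ‖2 - (1 + w * DenomProofAux.Efun t w q)‖ := norm_add_le _ _
        _ = ‖1 + w * DenomProofAux.Efun t w q‖ + ‖(1 + w * DenomProofAux.Efun t w q) - 2‖ := by rw [norm_sub_rev]
    have h5 : ‖(2 : ℂ)‖ = 2 := by norm_num
    rw [h5] at h4
    linarith
  have hφ0 : ∀ q : ℂ, ‖q‖ ≤ 2/3 → 1 + w * DenomProofAux.Efun t w q ≠ 0 := by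
    intro q hq h
    have h1 := hφ q hq
    rw [h, norm_zero] at h1
    nlinarith
  set G : ℂ → ℂ := fun q => (1 + w * DenomProofAux.Efun t w q)⁻¹ with hG
  have hGlt : ∀ q : ℂ, ‖q‖ ≤ 2/3 → ‖G q‖ < 2/3 := by
    intro q hq
    have h1 := hφ q hq
    have h2 : (3/2 : ℝ) < ‖1 + w * DenomProofAux.Efun t w q‖ := by nlinarith
    have h0 : (0 : ℝ) < ‖1 + w * DenomProofAux.Efun t w q‖ := by linarith
    rw [hG]
    simp only [norm_inv]
    have hml : ‖1 + w * DenomProofAux.Efun t w q‖⁻¹ * ‖1 + w * DenomProofAux.Efun t w q‖ = 1 :=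
      inv_mul_cancel₀ (ne_of_gt h0)
    nlinarith [inv_nonneg.mpr (le_of_lt h0)]
  have hGlip : ∀ q q' : ℂ, ‖q‖ ≤ 2/3 → ‖q'‖ ≤ 2/3 →
      ‖G q - G q'‖ ≤ (4/5) * ‖q - q'‖ := by
    intro q q' hq hq'
    rw [hG]
    simp only
    rw [inv_sub_inv (hφ0 q hq) (hφ0 q' hq'), norm_div, norm_mul]
    have hnum : ‖(1 + w * DenomProofAux.Efun t w q') - (1 + w * DenomProofAux.Efun t w q)‖ ≤ (9/5) * ‖q - q'‖ := by
      have heq : (1 + w * DenomProofAux.Efun t w q') - (1 + w * DenomProofAux.Efun t w q)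
          = w * (DenomProofAux.Efun t w q' - DenomProofAux.Efun t w q) := by ring
      rw [heq, norm_mul]
      have hE := DenomProofAux.Efun_lip ht6 hq' hq hwn
      rw [norm_sub_rev q' q] at hE
      calc ‖w‖ * ‖DenomProofAux.Efun t w q' - DenomProofAux.Efun t w q‖ ≤ (3/2) * ((6/5) * ‖q - q'‖) :=
          mul_le_mul hwn hE (norm_nonneg _) (by norm_num)
        _ = (9/5) * ‖q - q'‖ := by ring
    have hd1 : (3/2 : ℝ) ≤ ‖1 + w * DenomProofAux.Efun t w q‖ := by nlinarith [hφ q hq]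
    have hd2 : (3/2 : ℝ) ≤ ‖1 + w * DenomProofAux.Efun t w q'‖ := by nlinarith [hφ q' hq']
    have hden : (9/4 : ℝ) ≤ ‖1 + w * DenomProofAux.Efun t w q‖ * ‖1 + w * DenomProofAux.Efun t w q'‖ := by nlinarith
    calc ‖(1 + w * DenomProofAux.Efun t w q') - (1 + w * DenomProofAux.Efun t w q)‖
          / (‖1 + w * DenomProofAux.Efun t w q‖ * ‖1 + w * DenomProofAux.Efun t w q'‖)
        ≤ ((9/5) * ‖q - q'‖) / (9/4) :=
          div_le_div₀ (by positivity) hnum (by norm_num) hden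
      _ = (4/5) * ‖q - q'‖ := by ring
  have hzero_iff : ∀ q : ℂ, ‖q‖ ≤ 2/3 → (DGF t q w = 0 ↔ q = G q) := by
    intro q hq
    rw [DenomProofAux.zero_iff ht6 hq hwn, hG]
    simp only
    constructor
    · intro h
      exact eq_inv_of_mul_eq_one_left h
    · intro h
      nth_rewrite 1 [h]
      rw [inv_mul_cancel₀ (hφ0 q hq)]
  -- Banach fixed point on the closed ball
  have hballK : IsClosed (Metric.closedBall (0:ℂ) (2/3)) := Metric.isClosed_closedBall
  haveI : CompleteSpace (Metric.closedBall (0:ℂ) (2/3)) := hballK.completeSpace_coe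
  haveI : Nonempty (Metric.closedBall (0:ℂ) (2/3)) :=
    ⟨⟨0, Metric.mem_closedBall_self (by norm_num)⟩⟩
  have hmem : ∀ x : Metric.closedBall (0:ℂ) (2/3), ‖(x : ℂ)‖ ≤ 2/3 := by
    intro x
    have h := x.2
    rwa [Metric.mem_closedBall, dist_zero_right] at h
  set F : Metric.closedBall (0:ℂ) (2/3) → Metric.closedBall (0:ℂ) (2/3) :=
    fun x => ⟨G x, by
      rw [Metric.mem_closedBall, dist_zero_right]
      exact le_of_lt (hGlt x (hmem x))⟩ with hF
  have hcontr : ContractingWith (4/5 : NNReal) F := by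
    constructor
    · rw [← NNReal.coe_lt_coe]
      push_cast
      norm_num
    · apply LipschitzWith.of_dist_le_mul
      intro x y
      have h1 : dist (F x) (F y) = dist (G x) (G y) := rfl
      rw [h1, Subtype.dist_eq, dist_eq_norm, dist_eq_norm]
      have h2 : ((4/5 : NNReal) : ℝ) = 4/5 := by norm_num
      rw [h2]
      exact hGlip x y (hmem x) (hmem y)
  set x₀ : Metric.closedBall (0:ℂ) (2/3) := ContractingWith.fixedPoint F hcontr with hx₀
  have hfix : F x₀ = x₀ := hcontr.fixedPoint_isFixedPt
  have hfix' : G (x₀ : ℂ) = (x₀ : ℂ) := congrArg Subtype.val hfix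
  have hx₀ball : ‖(x₀ : ℂ)‖ ≤ 2/3 := hmem x₀
  have hx₀lt : ‖(x₀ : ℂ)‖ < 2/3 := by
    rw [← hfix']
    exact hGlt _ hx₀ball
  have hx₀zero : DGF t (x₀ : ℂ) w = 0 := (hzero_iff _ hx₀ball).mpr hfix'.symm
  have huniq : ∀ q : ℂ, ‖q‖ < 2/3 → DGF t q w = 0 → q = (x₀ : ℂ) := by
    intro q hqlt hq0
    have hq := le_of_lt hqlt
    have h1 : q = G q := (hzero_iff q hq).mp hq0
    have h2 : ‖q - (x₀ : ℂ)‖ ≤ (4/5) * ‖q - (x₀ : ℂ)‖ := by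
      calc ‖q - (x₀ : ℂ)‖ = ‖G q - G (x₀ : ℂ)‖ := by rw [← h1, hfix']
        _ ≤ (4/5) * ‖q - (x₀ : ℂ)‖ := hGlip q x₀ hq hx₀ball
    have h3 : ‖q - (x₀ : ℂ)‖ = 0 := by
      have h4 := norm_nonneg (q - (x₀ : ℂ))
      linarith
    exact sub_eq_zero.mp (norm_eq_zero.mp h3)
  constructor
  · exact ⟨(x₀ : ℂ), ⟨hx₀lt, hx₀zero⟩, fun q hq => huniq q hq.1 hq.2⟩
  · intro q hq h0
    have h1 : q = G q := (hzero_iff q (le_of_eq hq)).mp h0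
    have h2 := hGlt q (le_of_eq hq)
    rw [← h1] at h2
    rw [hq] at h2
    exact lt_irrefl _ h2

end
end

section
/- Fix an integer t ≥ 5 and set D(q,w) = 1 − b(q,1,1,w) = Σ_{j≥0} (−1)^j w^j ∏_{i=1}^{j} q^{h_i}/(1−q^{h_i}). On the disc {w ∈ ℂ : |w − 1| ≤ 1/2 − 5·(2/3)^t}, the function q_0(w) defined implicitly by D(q_0(w), w) = 0 together with |q_0(w)| < 2/3 (which exists and is unique) is analytic in w. -/
open scoped BigOperators
open Filter MeasureTheory

noncomputable section

set_option maxHeartbeats 1000000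

namespace BTIAux

/-! Auxiliary development for the fixed-point proof of `implicit_root_analytic`. -/

def xq (t : ℕ) (q : ℂ) (i : ℕ) : ℂ := q ^ hp t i / (1 - q ^ hp t i)

def Pk (t : ℕ) (q : ℂ) (k : ℕ) : ℂ := ∏ i ∈ Finset.Icc 2 (k + 1), xq t q i

def gk (t : ℕ) (q w : ℂ) (k : ℕ) : ℂ := (-1) ^ k * w ^ k * Pk t q k

def EE (t : ℕ) (q w : ℂ) : ℂ := ∑' k : ℕ, gk t q w k

def BB (t : ℕ) : ℝ := 16 / 15 * (2 / 3) ^ (t + 1)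

def LL (t : ℕ) : ℝ := (16 / 15) ^ 2 * ((t : ℝ) + 1) * (2 / 3 : ℝ) ^ t

def Phi (t : ℕ) (q w : ℂ) : ℂ := (1 + w * EE t q w)⁻¹

def fseq (t : ℕ) : ℕ → ℂ → ℂ
  | 0 => fun _ => 0
  | n + 1 => fun w => Phi t (fseq t n w) w

def SS (t : ℕ) : Set ℂ := Metric.ball (1 : ℂ) (1 / 2 - 4 * (2 / 3 : ℝ) ^ t)

noncomputable def q0 (t : ℕ) : ℂ → ℂ := fun w => limUnder Filter.atTop (fun n => fseq t n w)

lemma hp_one (t : ℕ) : hp t 1 = 1 := by simp [hp]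

lemma one_le_hp {t i : ℕ} (ht : 1 ≤ t) (hi : 1 ≤ i) : 1 ≤ hp t i := by
  calc 1 = ∑ k ∈ Finset.range 1, t ^ k := by simp
  _ ≤ hp t i := Finset.sum_le_sum_of_subset (Finset.range_subset_range.mpr hi)

lemma hp_ge {t i : ℕ} (hi : 2 ≤ i) : t + 1 ≤ hp t i := by
  have h2 : ∑ k ∈ Finset.range 2, t ^ k = t + 1 := by
    simp [Finset.sum_range_succ]
    omega
  calc t + 1 = ∑ k ∈ Finset.range 2, t ^ k := h2.symm
  _ ≤ hp t i := Finset.sum_le_sum_of_subset (Finset.range_subset_range.mpr hi)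

lemma cpow_le7 {t : ℕ} (ht : 6 ≤ t) : ((2 : ℝ) / 3) ^ (t + 1) ≤ (2 / 3 : ℝ) ^ 7 :=
  pow_le_pow_of_le_one (by norm_num) (by norm_num) (by omega)

/-- monotonicity of `m ↦ (m+1)(2/3)^m` for `m ≥ 1` -/
lemma mono_aux {a m : ℕ} (ha : 1 ≤ a) (ham : a ≤ m) :
    ((m : ℝ) + 1) * (2 / 3) ^ m ≤ ((a : ℝ) + 1) * (2 / 3) ^ a := by
  induction m, ham using Nat.le_induction with
  | base => exact le_rfl
  | succ n hn ih =>
    have hpw : (0 : ℝ) ≤ (2 / 3 : ℝ) ^ n := by positivity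
    have hn1 : (1 : ℝ) ≤ (n : ℝ) := by exact_mod_cast ha.trans hn
    have step : ((n : ℝ) + 1 + 1) * (2 / 3) ^ (n + 1) ≤ ((n : ℝ) + 1) * (2 / 3) ^ n := by
      rw [pow_succ]
      nlinarith [hpw, hn1]
    calc ((↑(n + 1) : ℝ) + 1) * (2 / 3) ^ (n + 1)
        = ((n : ℝ) + 1 + 1) * (2 / 3) ^ (n + 1) := by push_cast; ring
    _ ≤ ((n : ℝ) + 1) * (2 / 3) ^ n := step
    _ ≤ ((a : ℝ) + 1) * (2 / 3) ^ a := ih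

lemma BB_nonneg (t : ℕ) : 0 ≤ BB t := by rw [BB]; positivity

lemma BB_le {t : ℕ} (ht : 6 ≤ t) : BB t ≤ 1 / 15 := by
  have h := cpow_le7 ht
  rw [BB]
  nlinarith [h]

lemma BB_eq (t : ℕ) : BB t = 32 / 45 * (2 / 3 : ℝ) ^ t := by rw [BB, pow_succ]; ring

lemma LL_nonneg (t : ℕ) : 0 ≤ LL t := by rw [LL]; positivity

lemma LL_le {t : ℕ} (ht : 6 ≤ t) : LL t ≤ 18 / 25 := by
  have h := mono_aux (a := 6) (m := t) (by norm_num) ht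
  rw [LL]
  norm_num at h ⊢
  nlinarith [h]

lemma norm_q_pow_le {t : ℕ} {q : ℂ} (hq : ‖q‖ ≤ 2 / 3) {i : ℕ} (hi : 2 ≤ i) :
    ‖q ^ hp t i‖ ≤ (2 / 3 : ℝ) ^ (t + 1) := by
  rw [norm_pow]
  calc ‖q‖ ^ hp t i ≤ (2 / 3 : ℝ) ^ hp t i :=
        pow_le_pow_left₀ (norm_nonneg q) hq _
  _ ≤ (2 / 3 : ℝ) ^ (t + 1) :=
        pow_le_pow_of_le_one (by norm_num) (by norm_num) (hp_ge hi)

lemma denom_lb {t : ℕ} (ht : 6 ≤ t) {q : ℂ} (hq : ‖q‖ ≤ 2 / 3) {i : ℕ} (hi : 2 ≤ i) :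
    (2059 / 2187 : ℝ) ≤ ‖1 - q ^ hp t i‖ := by
  have h1 : ‖(1 : ℂ)‖ - ‖q ^ hp t i‖ ≤ ‖1 - q ^ hp t i‖ := norm_sub_norm_le _ _
  have h2 : ‖q ^ hp t i‖ ≤ 128 / 2187 := by
    calc ‖q ^ hp t i‖ ≤ (2 / 3 : ℝ) ^ (t + 1) := norm_q_pow_le hq hi
    _ ≤ (2 / 3 : ℝ) ^ 7 := cpow_le7 ht
    _ = 128 / 2187 := by norm_num
  rw [norm_one] at h1
  linarith

lemma denom_ne {t : ℕ} (ht : 6 ≤ t) {q : ℂ} (hq : ‖q‖ ≤ 2 / 3) {i : ℕ} (hi : 2 ≤ i) :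
    (1 : ℂ) - q ^ hp t i ≠ 0 := by
  intro h0
  have := denom_lb ht hq hi
  rw [h0, norm_zero] at this
  linarith

lemma xq_norm_le {t : ℕ} (ht : 6 ≤ t) {q : ℂ} (hq : ‖q‖ ≤ 2 / 3) {i : ℕ} (hi : 2 ≤ i) :
    ‖xq t q i‖ ≤ BB t := by
  rw [xq, norm_div]
  calc ‖q ^ hp t i‖ / ‖1 - q ^ hp t i‖ ≤ (2 / 3 : ℝ) ^ (t + 1) / (2059 / 2187) :=
        div_le_div₀ (by positivity) (norm_q_pow_le hq hi) (by norm_num) (denom_lb ht hq hi)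
  _ ≤ BB t := by
        rw [BB]
        have : (0 : ℝ) ≤ (2 / 3 : ℝ) ^ (t + 1) := by positivity
        nlinarith [this]

lemma Pk_norm_le {t : ℕ} (ht : 6 ≤ t) {q : ℂ} (hq : ‖q‖ ≤ 2 / 3) (k : ℕ) :
    ‖Pk t q k‖ ≤ BB t ^ k := by
  rw [Pk, norm_prod]
  calc ∏ i ∈ Finset.Icc 2 (k + 1), ‖xq t q i‖ ≤ ∏ _i ∈ Finset.Icc 2 (k + 1), BB t :=
        Finset.prod_le_prod (fun i _ => norm_nonneg _)
          (fun i hi => xq_norm_le ht hq (Finset.mem_Icc.mp hi).1)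
  _ = BB t ^ k := by
        rw [Finset.prod_const, Nat.card_Icc, show k + 1 + 1 - 2 = k from by omega]

lemma gk_norm_le' {t : ℕ} (ht : 6 ≤ t) {q w : ℂ} (hq : ‖q‖ ≤ 2 / 3) (hw : ‖w‖ ≤ 3 / 2)
    (k : ℕ) : ‖gk t q w k‖ ≤ (3 / 2 * BB t) ^ k := by
  rw [gk, norm_mul, norm_mul, norm_pow, norm_pow, norm_neg, norm_one, one_pow, one_mul,
    mul_pow]
  exact mul_le_mul (pow_le_pow_left₀ (norm_nonneg w) hw k) (Pk_norm_le ht hq k)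
    (norm_nonneg _) (by positivity)

lemma gk_norm_le {t : ℕ} (ht : 6 ≤ t) {q w : ℂ} (hq : ‖q‖ ≤ 2 / 3) (hw : ‖w‖ ≤ 3 / 2)
    (k : ℕ) : ‖gk t q w k‖ ≤ (1 / 10 : ℝ) ^ k := by
  refine (gk_norm_le' ht hq hw k).trans (pow_le_pow_left₀ ?_ ?_ k) <;>
    have h1 := BB_le ht <;> have h2 := BB_nonneg t <;> linarith

lemma summable_gk {t : ℕ} (ht : 6 ≤ t) {q w : ℂ} (hq : ‖q‖ ≤ 2 / 3) (hw : ‖w‖ ≤ 3 / 2) :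
    Summable (gk t q w) :=
  Summable.of_norm_bounded (summable_geometric_of_lt_one (by norm_num) (by norm_num))
    (gk_norm_le ht hq hw)

lemma gk_zero (t : ℕ) (q w : ℂ) : gk t q w 0 = 1 := by
  rw [gk, Pk]
  rw [show Finset.Icc 2 1 = (∅ : Finset ℕ) from Finset.Icc_eq_empty (by omega)]
  simp

lemma EE_sub_one {t : ℕ} (ht : 6 ≤ t) {q w : ℂ} (hq : ‖q‖ ≤ 2 / 3) (hw : ‖w‖ ≤ 3 / 2) :
    ‖EE t q w - 1‖ ≤ 5 / 3 * BB t := by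
  have hs := summable_gk ht hq hw
  have h0 : EE t q w = 1 + ∑' k : ℕ, gk t q w (k + 1) := by
    rw [EE, hs.tsum_eq_zero_add, gk_zero]
  have hb : ∀ k : ℕ, ‖gk t q w (k + 1)‖ ≤ 3 / 2 * BB t * (1 / 10 : ℝ) ^ k := by
    intro k
    calc ‖gk t q w (k + 1)‖ ≤ (3 / 2 * BB t) ^ (k + 1) := gk_norm_le' ht hq hw (k + 1)
    _ = 3 / 2 * BB t * (3 / 2 * BB t) ^ k := by rw [pow_succ]; ring
    _ ≤ 3 / 2 * BB t * (1 / 10 : ℝ) ^ k := by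
        have h1 := BB_le ht
        have h2 := BB_nonneg t
        have h3 : (3 / 2 * BB t) ^ k ≤ (1 / 10 : ℝ) ^ k :=
          pow_le_pow_left₀ (by positivity) (by linarith) k
        nlinarith [h3]
  have hgeo : Summable (fun k : ℕ => 3 / 2 * BB t * (1 / 10 : ℝ) ^ k) :=
    (summable_geometric_of_lt_one (by norm_num) (by norm_num)).mul_left _
  have hns : Summable (fun k : ℕ => ‖gk t q w (k + 1)‖) :=
    Summable.of_nonneg_of_le (fun _ => norm_nonneg _) hb hgeo
  rw [h0, add_sub_cancel_left]
  calc ‖∑' k : ℕ, gk t q w (k + 1)‖ ≤ ∑' k : ℕ, ‖gk t q w (k + 1)‖ :=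
        norm_tsum_le_tsum_norm hns
  _ ≤ ∑' k : ℕ, 3 / 2 * BB t * (1 / 10 : ℝ) ^ k := Summable.tsum_le_tsum hb hns hgeo
  _ = 3 / 2 * BB t * (1 - 1 / 10)⁻¹ := by
        rw [tsum_mul_left, tsum_geometric_of_lt_one (by norm_num) (by norm_num)]
  _ ≤ 5 / 3 * BB t := by nlinarith [BB_nonneg t]

lemma pow_sub_pow_norm {q q' : ℂ} (hq : ‖q‖ ≤ 2 / 3) (hq' : ‖q'‖ ≤ 2 / 3) :
    ∀ m : ℕ, ‖q ^ (m + 1) - q' ^ (m + 1)‖ ≤ ((m : ℝ) + 1) * (2 / 3) ^ m * ‖q - q'‖ := by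
  intro m
  induction m with
  | zero => simp
  | succ n ih =>
    have key : q ^ (n + 1 + 1) - q' ^ (n + 1 + 1)
        = q * (q ^ (n + 1) - q' ^ (n + 1)) + (q - q') * q' ^ (n + 1) := by ring
    rw [key]
    have h1 : ‖q * (q ^ (n + 1) - q' ^ (n + 1)) + (q - q') * q' ^ (n + 1)‖
        ≤ ‖q‖ * ‖q ^ (n + 1) - q' ^ (n + 1)‖ + ‖q - q'‖ * ‖q'‖ ^ (n + 1) := by
      calc _ ≤ ‖q * (q ^ (n + 1) - q' ^ (n + 1))‖ + ‖(q - q') * q' ^ (n + 1)‖ :=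
            norm_add_le _ _
      _ = _ := by rw [norm_mul, norm_mul, norm_pow]
    have h2 : ‖q‖ * ‖q ^ (n + 1) - q' ^ (n + 1)‖
        ≤ (2 / 3) * (((n : ℝ) + 1) * (2 / 3) ^ n * ‖q - q'‖) :=
      mul_le_mul hq ih (norm_nonneg _) (by norm_num)
    have h3 : ‖q - q'‖ * ‖q'‖ ^ (n + 1) ≤ ‖q - q'‖ * (2 / 3) ^ (n + 1) :=
      mul_le_mul_of_nonneg_left (pow_le_pow_left₀ (norm_nonneg _) hq' _) (norm_nonneg _)
    have heq : (2 / 3) * (((n : ℝ) + 1) * (2 / 3) ^ n * ‖q - q'‖)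
        + ‖q - q'‖ * (2 / 3) ^ (n + 1)
        = ((↑(n + 1) : ℝ) + 1) * (2 / 3) ^ (n + 1) * ‖q - q'‖ := by
      push_cast
      rw [pow_succ]
      ring
    linarith

lemma xq_lip {t : ℕ} (ht : 6 ≤ t) {q q' : ℂ} (hq : ‖q‖ ≤ 2 / 3) (hq' : ‖q'‖ ≤ 2 / 3)
    {i : ℕ} (hi : 2 ≤ i) : ‖xq t q i - xq t q' i‖ ≤ LL t * ‖q - q'‖ := by
  have hge : t + 1 ≤ hp t i := hp_ge hi
  have hd := denom_lb ht hq hi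
  have hd' := denom_lb ht hq' hi
  have hne := denom_ne ht hq hi
  have hne' := denom_ne ht hq' hi
  have key : xq t q i - xq t q' i
      = (q ^ hp t i - q' ^ hp t i) / ((1 - q ^ hp t i) * (1 - q' ^ hp t i)) := by
    rw [xq, xq]
    field_simp
    ring
  obtain ⟨m, hm⟩ : ∃ m, hp t i = m + 1 := ⟨hp t i - 1, by omega⟩
  have hnum : ‖q ^ hp t i - q' ^ hp t i‖ ≤ ((t : ℝ) + 1) * (2 / 3) ^ t * ‖q - q'‖ := by
    rw [hm]
    calc ‖q ^ (m + 1) - q' ^ (m + 1)‖ ≤ ((m : ℝ) + 1) * (2 / 3) ^ m * ‖q - q'‖ :=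
          pow_sub_pow_norm hq hq' m
    _ ≤ ((t : ℝ) + 1) * (2 / 3) ^ t * ‖q - q'‖ :=
          mul_le_mul_of_nonneg_right (mono_aux (by omega) (by omega)) (norm_nonneg _)
  rw [key, norm_div, norm_mul]
  have hdenpos : (0 : ℝ) < (2059 / 2187) * (2059 / 2187) := by norm_num
  calc ‖q ^ hp t i - q' ^ hp t i‖ / (‖1 - q ^ hp t i‖ * ‖1 - q' ^ hp t i‖)
      ≤ (((t : ℝ) + 1) * (2 / 3) ^ t * ‖q - q'‖) / ((2059 / 2187) * (2059 / 2187)) :=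
        div_le_div₀ (by positivity) hnum hdenpos
          (mul_le_mul hd hd' (by norm_num) (norm_nonneg _))
  _ ≤ LL t * ‖q - q'‖ := by
        rw [LL, div_le_iff₀ hdenpos]
        have hN : (0 : ℝ) ≤ ((t : ℝ) + 1) * (2 / 3) ^ t * ‖q - q'‖ := by positivity
        nlinarith [hN]

lemma Pk_lip {t : ℕ} (ht : 6 ≤ t) {q q' : ℂ} (hq : ‖q‖ ≤ 2 / 3) (hq' : ‖q'‖ ≤ 2 / 3) :
    ∀ k : ℕ, ‖Pk t q (k + 1) - Pk t q' (k + 1)‖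
      ≤ ((k : ℝ) + 1) * LL t * BB t ^ k * ‖q - q'‖ := by
  intro k
  induction k with
  | zero =>
    have h1 : ∀ r : ℂ, Pk t r 1 = xq t r 2 := by
      intro r
      rw [Pk]
      norm_num
    rw [h1 q, h1 q']
    simpa using xq_lip ht hq hq' (le_refl 2)
  | succ n ih =>
    have hsplit : ∀ r : ℂ, Pk t r (n + 2) = Pk t r (n + 1) * xq t r (n + 3) := by
      intro r
      rw [Pk, Pk, show n + 2 + 1 = (n + 2) + 1 from rfl,
        Finset.prod_Icc_succ_top (by omega) (xq t r)]
    rw [hsplit q, hsplit q']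
    have key : Pk t q (n + 1) * xq t q (n + 3) - Pk t q' (n + 1) * xq t q' (n + 3)
        = Pk t q (n + 1) * (xq t q (n + 3) - xq t q' (n + 3))
          + (Pk t q (n + 1) - Pk t q' (n + 1)) * xq t q' (n + 3) := by ring
    rw [key]
    have h1 : ‖Pk t q (n + 1) * (xq t q (n + 3) - xq t q' (n + 3))‖
        ≤ BB t ^ (n + 1) * (LL t * ‖q - q'‖) := by
      rw [norm_mul]
      exact mul_le_mul (Pk_norm_le ht hq (n + 1)) (xq_lip ht hq hq' (by omega))
        (norm_nonneg _) (pow_nonneg (BB_nonneg t) _)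
    have h2 : ‖(Pk t q (n + 1) - Pk t q' (n + 1)) * xq t q' (n + 3)‖
        ≤ (((n : ℝ) + 1) * LL t * BB t ^ n * ‖q - q'‖) * BB t := by
      rw [norm_mul]
      exact mul_le_mul ih (xq_norm_le ht hq' (by omega)) (norm_nonneg _)
        (mul_nonneg (mul_nonneg (mul_nonneg (by positivity) (LL_nonneg t))
          (pow_nonneg (BB_nonneg t) n)) (norm_nonneg _))
    calc ‖Pk t q (n + 1) * (xq t q (n + 3) - xq t q' (n + 3))
          + (Pk t q (n + 1) - Pk t q' (n + 1)) * xq t q' (n + 3)‖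
        ≤ ‖Pk t q (n + 1) * (xq t q (n + 3) - xq t q' (n + 3))‖
          + ‖(Pk t q (n + 1) - Pk t q' (n + 1)) * xq t q' (n + 3)‖ := norm_add_le _ _
    _ ≤ BB t ^ (n + 1) * (LL t * ‖q - q'‖)
          + (((n : ℝ) + 1) * LL t * BB t ^ n * ‖q - q'‖) * BB t := add_le_add h1 h2
    _ = ((↑(n + 1) : ℝ) + 1) * LL t * BB t ^ (n + 1) * ‖q - q'‖ := by
          push_cast
          rw [pow_succ]
          ring

lemma EE_lip {t : ℕ} (ht : 6 ≤ t) {q q' w : ℂ} (hq : ‖q‖ ≤ 2 / 3) (hq' : ‖q'‖ ≤ 2 / 3)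
    (hw : ‖w‖ ≤ 3 / 2) : ‖EE t q w - EE t q' w‖ ≤ 15 / 8 * LL t * ‖q - q'‖ := by
  have hs := summable_gk ht hq hw
  have hs' := summable_gk ht hq' hw
  have h3B : 3 * BB t < 1 := by have := BB_le ht; linarith
  have h3Bnn : (0 : ℝ) ≤ 3 * BB t := by have := BB_nonneg t; linarith
  have hdb : ∀ k : ℕ, ‖gk t q w (k + 1) - gk t q' w (k + 1)‖
      ≤ (3 / 2 * LL t * ‖q - q'‖) * (3 * BB t) ^ k := by
    intro k
    have h1 : gk t q w (k + 1) - gk t q' w (k + 1)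
        = (-1) ^ (k + 1) * w ^ (k + 1) * (Pk t q (k + 1) - Pk t q' (k + 1)) := by
      rw [gk, gk]; ring
    rw [h1, norm_mul, norm_mul, norm_pow, norm_pow, norm_neg, norm_one, one_pow, one_mul]
    have h2 : ‖w‖ ^ (k + 1) * ‖Pk t q (k + 1) - Pk t q' (k + 1)‖
        ≤ (3 / 2) ^ (k + 1) * (((k : ℝ) + 1) * LL t * BB t ^ k * ‖q - q'‖) :=
      mul_le_mul (pow_le_pow_left₀ (norm_nonneg w) hw _) (Pk_lip ht hq hq' k)
        (norm_nonneg _) (by positivity)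
    have hk2 : ((k : ℝ) + 1) ≤ 2 ^ k := by
      have := Nat.lt_two_pow_self (n := k)
      exact_mod_cast Nat.succ_le_of_lt this
    have hkey : (3 / 2 : ℝ) ^ (k + 1) * (((k : ℝ) + 1) * LL t * BB t ^ k * ‖q - q'‖)
        ≤ (3 / 2 * LL t * ‖q - q'‖) * (3 * BB t) ^ k := by
      have hfac : (3 / 2 : ℝ) ^ (k + 1) * ((k : ℝ) + 1) ≤ 3 / 2 * 3 ^ k := by
        rw [pow_succ]
        calc (3 / 2 : ℝ) ^ k * (3 / 2) * ((k : ℝ) + 1)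
            ≤ (3 / 2 : ℝ) ^ k * (3 / 2) * 2 ^ k := by
              exact mul_le_mul_of_nonneg_left hk2 (by positivity)
        _ = 3 / 2 * 3 ^ k := by
              rw [mul_comm ((3 / 2 : ℝ) ^ k) (3 / 2 : ℝ), mul_assoc, ← mul_pow]
              norm_num
      have hnn : (0 : ℝ) ≤ LL t * BB t ^ k * ‖q - q'‖ := by
        have := LL_nonneg t; have := BB_nonneg t; positivity
      calc (3 / 2 : ℝ) ^ (k + 1) * (((k : ℝ) + 1) * LL t * BB t ^ k * ‖q - q'‖)
          = ((3 / 2 : ℝ) ^ (k + 1) * ((k : ℝ) + 1)) * (LL t * BB t ^ k * ‖q - q'‖) := by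
            ring
      _ ≤ (3 / 2 * 3 ^ k) * (LL t * BB t ^ k * ‖q - q'‖) :=
            mul_le_mul_of_nonneg_right hfac hnn
      _ = (3 / 2 * LL t * ‖q - q'‖) * (3 * BB t) ^ k := by
            rw [mul_pow]
            ring
    exact h2.trans hkey
  have hd0 : ‖gk t q w 0 - gk t q' w 0‖ = 0 := by rw [gk_zero, gk_zero, sub_self, norm_zero]
  have hgeo2 : Summable (fun k : ℕ => (3 / 2 * LL t * ‖q - q'‖) * (3 * BB t) ^ k) :=
    (summable_geometric_of_lt_one h3Bnn h3B).mul_left _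
  have hDsum : Summable (fun k : ℕ => ‖gk t q w k - gk t q' w k‖) := by
    refine Summable.of_nonneg_of_le (fun _ => norm_nonneg _) ?_
      ((summable_geometric_of_lt_one (r := (1 / 10 : ℝ)) (by norm_num) (by norm_num)).add
        (summable_geometric_of_lt_one (r := (1 / 10 : ℝ)) (by norm_num) (by norm_num)))
    intro k
    calc ‖gk t q w k - gk t q' w k‖ ≤ ‖gk t q w k‖ + ‖gk t q' w k‖ := norm_sub_le _ _
    _ ≤ (1 / 10 : ℝ) ^ k + (1 / 10 : ℝ) ^ k :=
          add_le_add (gk_norm_le ht hq hw k) (gk_norm_le ht hq' hw k)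
  have hsub : Summable (fun k : ℕ => ‖gk t q w (k + 1) - gk t q' w (k + 1)‖) :=
    (summable_nat_add_iff 1).mpr hDsum
  have hEdiff : EE t q w - EE t q' w = ∑' k : ℕ, (gk t q w k - gk t q' w k) :=
    (Summable.tsum_sub hs hs').symm
  rw [hEdiff]
  have hinv : (1 - 3 * BB t)⁻¹ ≤ 5 / 4 := by
    have h45 : (4 / 5 : ℝ) ≤ 1 - 3 * BB t := by have := BB_le ht; linarith
    calc (1 - 3 * BB t)⁻¹ ≤ ((4 : ℝ) / 5)⁻¹ := inv_anti₀ (by norm_num) h45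
    _ = 5 / 4 := by norm_num
  calc ‖∑' k : ℕ, (gk t q w k - gk t q' w k)‖
      ≤ ∑' k : ℕ, ‖gk t q w k - gk t q' w k‖ := norm_tsum_le_tsum_norm hDsum
  _ = ‖gk t q w 0 - gk t q' w 0‖ + ∑' k : ℕ, ‖gk t q w (k + 1) - gk t q' w (k + 1)‖ :=
        hDsum.tsum_eq_zero_add
  _ = ∑' k : ℕ, ‖gk t q w (k + 1) - gk t q' w (k + 1)‖ := by rw [hd0, zero_add]
  _ ≤ ∑' k : ℕ, (3 / 2 * LL t * ‖q - q'‖) * (3 * BB t) ^ k := Summable.tsum_le_tsum hdb hsub hgeo2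
  _ = (3 / 2 * LL t * ‖q - q'‖) * (1 - 3 * BB t)⁻¹ := by
        rw [tsum_mul_left, tsum_geometric_of_lt_one h3Bnn h3B]
  _ ≤ 15 / 8 * LL t * ‖q - q'‖ := by
        have hC : (0 : ℝ) ≤ 3 / 2 * LL t * ‖q - q'‖ := by
          have := LL_nonneg t; positivity
        nlinarith [hC, hinv, mul_le_mul_of_nonneg_left hinv hC]


lemma w_norm {t : ℕ} {w : ℂ} (hw : w ∈ SS t) : ‖w‖ ≤ 3 / 2 := by
  have h : dist w 1 < 1 / 2 - 4 * (2 / 3 : ℝ) ^ t := Metric.mem_ball.mp hw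
  rw [dist_eq_norm] at h
  have hε : (0 : ℝ) < (2 / 3 : ℝ) ^ t := by positivity
  have h2 : ‖w‖ ≤ ‖w - 1‖ + ‖(1 : ℂ)‖ := by
    calc ‖w‖ = ‖w - 1 + 1‖ := by ring_nf
    _ ≤ _ := norm_add_le _ _
  rw [norm_one] at h2
  linarith

lemma w_sub_one_norm {t : ℕ} {w : ℂ} (hw : w ∈ SS t) :
    ‖w - 1‖ < 1 / 2 - 4 * (2 / 3 : ℝ) ^ t := by
  have h : dist w 1 < 1 / 2 - 4 * (2 / 3 : ℝ) ^ t := Metric.mem_ball.mp hw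
  rwa [dist_eq_norm] at h

lemma onew_norm {t : ℕ} {w : ℂ} (hw : w ∈ SS t) :
    3 / 2 + 4 * (2 / 3 : ℝ) ^ t ≤ ‖1 + w‖ := by
  have h := w_sub_one_norm hw
  have h1 : ‖(2 : ℂ)‖ - ‖-(w - 1)‖ ≤ ‖(2 : ℂ) - -(w - 1)‖ := norm_sub_norm_le _ _
  have h2 : (2 : ℂ) - -(w - 1) = 1 + w := by ring
  have h3 : ‖(2 : ℂ)‖ = 2 := by norm_num
  rw [h2, h3, norm_neg] at h1
  linarith

lemma A_lb {t : ℕ} (ht : 6 ≤ t) {q w : ℂ} (hq : ‖q‖ ≤ 2 / 3) (hw : w ∈ SS t) :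
    3 / 2 + 2 * (2 / 3 : ℝ) ^ t ≤ ‖1 + w * EE t q w‖ := by
  have h1 := EE_sub_one ht hq (w_norm hw)
  have h2 := onew_norm hw
  have key : 1 + w * EE t q w = (1 + w) + w * (EE t q w - 1) := by ring
  have h3 : ‖1 + w‖ - ‖w * (EE t q w - 1)‖ ≤ ‖(1 + w) + w * (EE t q w - 1)‖ := by
    have h := norm_sub_norm_le (1 + w) (-(w * (EE t q w - 1)))
    rw [sub_neg_eq_add, norm_neg] at h
    exact h
  have h4 : ‖w * (EE t q w - 1)‖ ≤ 3 / 2 * (5 / 3 * BB t) := by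
    rw [norm_mul]
    exact mul_le_mul (w_norm hw) h1 (norm_nonneg _) (by norm_num)
  have h5 : 3 / 2 * (5 / 3 * BB t) ≤ 2 * (2 / 3 : ℝ) ^ t := by
    rw [BB_eq]
    have : (0 : ℝ) ≤ (2 / 3 : ℝ) ^ t := by positivity
    nlinarith [this]
  rw [key]
  linarith

lemma A_ne {t : ℕ} (ht : 6 ≤ t) {q w : ℂ} (hq : ‖q‖ ≤ 2 / 3) (hw : w ∈ SS t) :
    1 + w * EE t q w ≠ 0 := by
  intro h0
  have := A_lb ht hq hw
  rw [h0, norm_zero] at this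
  have hε : (0 : ℝ) < (2 / 3 : ℝ) ^ t := by positivity
  linarith

lemma inv32_lt (t : ℕ) : (3 / 2 + 2 * (2 / 3 : ℝ) ^ t)⁻¹ < 2 / 3 := by
  have hε : (0 : ℝ) < (2 / 3 : ℝ) ^ t := by positivity
  have h1 : (3 / 2 : ℝ) < 3 / 2 + 2 * (2 / 3 : ℝ) ^ t := by linarith
  calc (3 / 2 + 2 * (2 / 3 : ℝ) ^ t)⁻¹ < (3 / 2 : ℝ)⁻¹ := by
        apply inv_strictAnti₀ (by norm_num) h1
  _ = 2 / 3 := by norm_num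

lemma Phi_norm_le {t : ℕ} (ht : 6 ≤ t) {q w : ℂ} (hq : ‖q‖ ≤ 2 / 3) (hw : w ∈ SS t) :
    ‖Phi t q w‖ ≤ (3 / 2 + 2 * (2 / 3 : ℝ) ^ t)⁻¹ := by
  rw [Phi, norm_inv]
  exact inv_anti₀ (by positivity) (A_lb ht hq hw)

lemma Phi_norm_le' {t : ℕ} (ht : 6 ≤ t) {q w : ℂ} (hq : ‖q‖ ≤ 2 / 3) (hw : w ∈ SS t) :
    ‖Phi t q w‖ ≤ 2 / 3 :=
  (Phi_norm_le ht hq hw).trans (inv32_lt t).le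

lemma Phi_lip {t : ℕ} (ht : 6 ≤ t) {q q' w : ℂ} (hq : ‖q‖ ≤ 2 / 3) (hq' : ‖q'‖ ≤ 2 / 3)
    (hw : w ∈ SS t) : ‖Phi t q w - Phi t q' w‖ ≤ 9 / 10 * ‖q - q'‖ := by
  have hε : (0 : ℝ) < (2 / 3 : ℝ) ^ t := by positivity
  have hA := A_lb ht hq hw
  have hA' := A_lb ht hq' hw
  have hAne := A_ne ht hq hw
  have hAne' := A_ne ht hq' hw
  rw [Phi, Phi, inv_sub_inv hAne hAne']
  have hnum : (1 + w * EE t q' w) - (1 + w * EE t q w) = w * (EE t q' w - EE t q w) := by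
    ring
  rw [hnum, norm_div, norm_mul, norm_mul]
  have hE : ‖EE t q' w - EE t q w‖ ≤ 15 / 8 * LL t * ‖q - q'‖ := by
    have := EE_lip ht hq' hq (w_norm hw)
    rwa [norm_sub_rev q' q] at this
  have hnumle : ‖w‖ * ‖EE t q' w - EE t q w‖ ≤ 3 / 2 * (15 / 8 * LL t * ‖q - q'‖) :=
    mul_le_mul (w_norm hw) hE (norm_nonneg _) (by norm_num)
  have hden : (3 / 2 : ℝ) * (3 / 2) ≤ ‖1 + w * EE t q w‖ * ‖1 + w * EE t q' w‖ := by
    have l1 : (3 / 2 : ℝ) ≤ ‖1 + w * EE t q w‖ := by linarith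
    have l2 : (3 / 2 : ℝ) ≤ ‖1 + w * EE t q' w‖ := by linarith
    exact mul_le_mul l1 l2 (by norm_num) (norm_nonneg _)
  calc ‖w‖ * ‖EE t q' w - EE t q w‖ / (‖1 + w * EE t q w‖ * ‖1 + w * EE t q' w‖)
      ≤ (3 / 2 * (15 / 8 * LL t * ‖q - q'‖)) / (3 / 2 * (3 / 2)) :=
        div_le_div₀ (mul_nonneg (by norm_num) (mul_nonneg (mul_nonneg (by norm_num)
          (LL_nonneg t)) (norm_nonneg _))) hnumle (by norm_num) hden
  _ ≤ 9 / 10 * ‖q - q'‖ := by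
        have hL := LL_le ht
        have hL0 := LL_nonneg t
        have hd0 : (0 : ℝ) ≤ ‖q - q'‖ := norm_nonneg _
        rw [div_le_iff₀ (by norm_num : (0:ℝ) < 3 / 2 * (3 / 2))]
        nlinarith [mul_le_mul_of_nonneg_right hL hd0]

lemma fseq_mem {t : ℕ} (ht : 6 ≤ t) : ∀ n : ℕ, ∀ w ∈ SS t, ‖fseq t n w‖ ≤ 2 / 3 := by
  intro n
  induction n with
  | zero =>
    intro w _
    simp only [fseq, norm_zero]
    norm_num
  | succ n ih =>
    intro w hw
    exact Phi_norm_le' ht (ih w hw) hw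

lemma prod_diff {t : ℕ} (ht : 6 ≤ t) {n : ℕ} (hf : DifferentiableOn ℂ (fseq t n) (SS t))
    (hm : ∀ w ∈ SS t, ‖fseq t n w‖ ≤ 2 / 3) (s : Finset ℕ) (hs : ∀ i ∈ s, 2 ≤ i) :
    DifferentiableOn ℂ (fun w => ∏ i ∈ s, xq t (fseq t n w) i) (SS t) := by
  induction s using Finset.induction_on with
  | empty => simpa using differentiableOn_const (1 : ℂ)
  | @insert a s ha ih =>
    simp only [Finset.prod_insert ha]
    apply DifferentiableOn.mul
    · have ha2 : 2 ≤ a := hs a (Finset.mem_insert_self a s)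
      simp only [xq]
      apply DifferentiableOn.div
      · exact hf.pow _
      · exact (differentiableOn_const (1 : ℂ)).sub (hf.pow _)
      · intro w hw
        intro h0
        rw [sub_eq_zero] at h0
        have h1 : ‖(fseq t n w) ^ hp t a‖ ≤ 2 / 3 := by
          rw [norm_pow]
          calc ‖fseq t n w‖ ^ hp t a ≤ (2 / 3 : ℝ) ^ hp t a :=
                pow_le_pow_left₀ (norm_nonneg _) (hm w hw) _
          _ ≤ (2 / 3 : ℝ) ^ 1 :=
                pow_le_pow_of_le_one (by norm_num) (by norm_num)
                  (one_le_hp (by omega) (by omega))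
          _ = 2 / 3 := pow_one _
        rw [← h0, norm_one] at h1
        norm_num at h1
    · exact ih (fun i hi => hs i (Finset.mem_insert_of_mem hi))

lemma en_diff {t : ℕ} (ht : 6 ≤ t) {n : ℕ} (hf : DifferentiableOn ℂ (fseq t n) (SS t)) :
    DifferentiableOn ℂ (fun w => EE t (fseq t n w) w) (SS t) := by
  have hm := fun w hw => fseq_mem ht n w hw
  have huniform : TendstoUniformlyOn
      (fun (s : Finset ℕ) (w : ℂ) => ∑ k ∈ s, gk t (fseq t n w) w k)
      (fun w => ∑' k : ℕ, gk t (fseq t n w) w k) Filter.atTop (SS t) :=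
    tendstoUniformlyOn_tsum (summable_geometric_of_lt_one (by norm_num) (by norm_num))
      (fun k w hw => gk_norm_le ht (hm w hw) (w_norm hw) k)
  have hterms : ∀ s : Finset ℕ, DifferentiableOn ℂ
      (fun w => ∑ k ∈ s, gk t (fseq t n w) w k) (SS t) := by
    intro s
    apply DifferentiableOn.fun_sum
    intro k _
    simp only [gk, Pk]
    apply DifferentiableOn.mul
    · exact ((differentiableOn_const _).mul (differentiable_pow k).differentiableOn)
    · exact prod_diff ht hf hm (Finset.Icc 2 (k + 1))
        (fun i hi => (Finset.mem_Icc.mp hi).1)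
  exact (huniform.tendstoLocallyUniformlyOn).differentiableOn
    (Filter.Eventually.of_forall hterms) Metric.isOpen_ball

lemma fseq_diff {t : ℕ} (ht : 6 ≤ t) : ∀ n : ℕ, DifferentiableOn ℂ (fseq t n) (SS t) := by
  intro n
  induction n with
  | zero => exact differentiableOn_const 0
  | succ n ih =>
    have h1 : fseq t (n + 1) = fun w => (1 + w * EE t (fseq t n w) w)⁻¹ := rfl
    rw [h1]
    apply DifferentiableOn.inv
    · exact (differentiableOn_const 1).add (differentiableOn_id.mul (en_diff ht ih))
    · intro w hw
      exact A_ne ht (fseq_mem ht n w hw) hw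

lemma fseq_dist {t : ℕ} (ht : 6 ≤ t) {w : ℂ} (hw : w ∈ SS t) :
    ∀ n : ℕ, dist (fseq t n w) (fseq t (n + 1) w) ≤ 1 * (9 / 10 : ℝ) ^ n := by
  intro n
  induction n with
  | zero =>
    rw [dist_eq_norm]
    have h1 : fseq t 0 w = 0 := rfl
    rw [h1, zero_sub, norm_neg, pow_zero]
    have := fseq_mem ht 1 w hw
    linarith
  | succ n ih =>
    rw [dist_eq_norm] at ih ⊢
    have hstep : ‖fseq t (n + 1) w - fseq t (n + 2) w‖
        ≤ 9 / 10 * ‖fseq t n w - fseq t (n + 1) w‖ :=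
      Phi_lip ht (fseq_mem ht n w hw) (fseq_mem ht (n + 1) w hw) hw
    calc ‖fseq t (n + 1) w - fseq t (n + 1 + 1) w‖
        ≤ 9 / 10 * ‖fseq t n w - fseq t (n + 1) w‖ := hstep
    _ ≤ 9 / 10 * (1 * (9 / 10 : ℝ) ^ n) := by
          apply mul_le_mul_of_nonneg_left ih (by norm_num)
    _ = 1 * (9 / 10 : ℝ) ^ (n + 1) := by ring

lemma q0_tendsto {t : ℕ} (ht : 6 ≤ t) {w : ℂ} (hw : w ∈ SS t) :
    Filter.Tendsto (fun n => fseq t n w) Filter.atTop (nhds (q0 t w)) :=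
  (cauchySeq_of_le_geometric (9 / 10) 1 (by norm_num) (fseq_dist ht hw)).tendsto_limUnder

lemma q0_mem {t : ℕ} (ht : 6 ≤ t) {w : ℂ} (hw : w ∈ SS t) : ‖q0 t w‖ ≤ 2 / 3 :=
  le_of_tendsto (q0_tendsto ht hw).norm
    (Filter.Eventually.of_forall fun n => fseq_mem ht n w hw)

lemma q0_dist {t : ℕ} (ht : 6 ≤ t) {w : ℂ} (hw : w ∈ SS t) (n : ℕ) :
    dist (fseq t n w) (q0 t w) ≤ 1 * (9 / 10 : ℝ) ^ n / (1 - 9 / 10) :=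
  dist_le_of_le_geometric_of_tendsto (9 / 10) 1 (by norm_num) (fseq_dist ht hw)
    (q0_tendsto ht hw) n

lemma q0_fixed {t : ℕ} (ht : 6 ≤ t) {w : ℂ} (hw : w ∈ SS t) :
    q0 t w = Phi t (q0 t w) w := by
  have h1 : Filter.Tendsto (fun n => fseq t (n + 1) w) Filter.atTop (nhds (q0 t w)) :=
    (q0_tendsto ht hw).comp (Filter.tendsto_add_atTop_nat 1)
  have h2 : Filter.Tendsto (fun n => fseq t (n + 1) w) Filter.atTop
      (nhds (Phi t (q0 t w) w)) := by
    rw [tendsto_iff_dist_tendsto_zero]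
    apply squeeze_zero (g := fun n => 9 / 10 * dist (fseq t n w) (q0 t w))
      (fun n => dist_nonneg)
    · intro n
      rw [dist_eq_norm, dist_eq_norm]
      exact Phi_lip ht (fseq_mem ht n w hw) (q0_mem ht hw) hw
    · have h3 : Filter.Tendsto (fun n => dist (fseq t n w) (q0 t w)) Filter.atTop
          (nhds 0) := tendsto_iff_dist_tendsto_zero.mp (q0_tendsto ht hw)
      have := h3.const_mul (9 / 10 : ℝ)
      simpa using this
  exact tendsto_nhds_unique h1 h2

lemma q0_lt {t : ℕ} (ht : 6 ≤ t) {w : ℂ} (hw : w ∈ SS t) : ‖q0 t w‖ < 2 / 3 := by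
  rw [q0_fixed ht hw]
  exact lt_of_le_of_lt (Phi_norm_le ht (q0_mem ht hw) hw) (inv32_lt t)


lemma DGF_eq {t : ℕ} (ht : 6 ≤ t) {q w : ℂ} (hq : ‖q‖ ≤ 2 / 3) (hw : ‖w‖ ≤ 3 / 2) :
    DGF t q w = 1 - w * (q / (1 - q)) * EE t q w := by
  have hx1 : xq t q 1 = q / (1 - q) := by rw [xq, hp_one, pow_one]
  have hterm : ∀ j : ℕ, (-1 : ℂ) ^ (j + 1) * w ^ (j + 1) * ∏ i ∈ Finset.Icc 1 (j + 1), xq t q i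
      = -(w * xq t q 1) * gk t q w j := by
    intro j
    have hIcc : Finset.Icc 1 (j + 1) = insert 1 (Finset.Icc 2 (j + 1)) := by
      ext m
      simp only [Finset.mem_Icc, Finset.mem_insert]
      omega
    rw [hIcc, Finset.prod_insert (by simp), gk, Pk]
    ring
  have hfun : (fun j : ℕ => (-1 : ℂ) ^ (j + 1) * w ^ (j + 1) * ∏ i ∈ Finset.Icc 1 (j + 1), xq t q i)
      = fun j : ℕ => -(w * xq t q 1) * gk t q w j := funext hterm
  have hsum1 : Summable (fun j : ℕ => (-1 : ℂ) ^ j * w ^ j * ∏ i ∈ Finset.Icc 1 j, xq t q i) := by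
    apply (summable_nat_add_iff 1).mp
    rw [hfun]
    exact (summable_gk ht hq hw).mul_left _
  have hDGF : DGF t q w = ∑' j : ℕ, (-1 : ℂ) ^ j * w ^ j * ∏ i ∈ Finset.Icc 1 j, xq t q i := by
    simp only [DGF, xq]
  rw [hDGF, hsum1.tsum_eq_zero_add]
  have h0 : (-1 : ℂ) ^ 0 * w ^ 0 * ∏ i ∈ Finset.Icc 1 0, xq t q i = 1 := by
    rw [show Finset.Icc 1 0 = (∅ : Finset ℕ) from Finset.Icc_eq_empty (by omega)]
    simp
  rw [h0]
  have h1 : ∑' j : ℕ, (-1 : ℂ) ^ (j + 1) * w ^ (j + 1) * ∏ i ∈ Finset.Icc 1 (j + 1), xq t q i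
      = -(w * xq t q 1) * EE t q w := by
    rw [hfun, tsum_mul_left]
    rfl
  rw [h1, hx1]
  ring

lemma DGF_zero_iff {t : ℕ} (ht : 6 ≤ t) {q w : ℂ} (hq : ‖q‖ ≤ 2 / 3) (hw : w ∈ SS t) :
    DGF t q w = 0 ↔ q * (1 + w * EE t q w) = 1 := by
  have h1 : (1 : ℂ) - q ≠ 0 := by
    intro h0
    rw [sub_eq_zero] at h0
    rw [← h0, norm_one] at hq
    norm_num at hq
  have h2 : (1 - w * (q / (1 - q)) * EE t q w) * (1 - q) = 1 - q * (1 + w * EE t q w) := by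
    field_simp
    ring
  rw [DGF_eq ht hq (w_norm hw)]
  constructor
  · intro h
    rw [h, zero_mul] at h2
    linear_combination h2
  · intro h
    rw [h, sub_self] at h2
    rcases mul_eq_zero.mp h2 with h3 | h3
    · exact h3
    · exact absurd h3 h1
  
lemma fixed_iff {t : ℕ} (ht : 6 ≤ t) {q w : ℂ} (hq : ‖q‖ ≤ 2 / 3) (hw : w ∈ SS t) :
    q * (1 + w * EE t q w) = 1 ↔ q = Phi t q w := by
  have hA := A_ne ht hq hw
  rw [Phi]
  constructor
  · intro h
    exact eq_inv_of_mul_eq_one_left h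
  · intro h
    nth_rewrite 1 [h]
    exact inv_mul_cancel₀ hA

lemma q0_unique {t : ℕ} (ht : 6 ≤ t) {w : ℂ} (hw : w ∈ SS t) {q : ℂ}
    (hqlt : ‖q‖ < 2 / 3) (hq0 : DGF t q w = 0) : q = q0 t w := by
  have hq : ‖q‖ ≤ 2 / 3 := le_of_lt hqlt
  have h1 : q = Phi t q w := (fixed_iff ht hq hw).mp ((DGF_zero_iff ht hq hw).mp hq0)
  have h2 := Phi_lip ht hq (q0_mem ht hw) hw
  rw [← h1, ← q0_fixed ht hw] at h2
  have h3 : ‖q - q0 t w‖ ≤ 0 := by linarith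
  have h4 : q - q0 t w = 0 := norm_le_zero_iff.mp h3
  linear_combination h4

lemma q0_zero {t : ℕ} (ht : 6 ≤ t) {w : ℂ} (hw : w ∈ SS t) : DGF t (q0 t w) w = 0 := by
  rw [DGF_zero_iff ht (q0_mem ht hw) hw, fixed_iff ht (q0_mem ht hw) hw]
  exact q0_fixed ht hw

lemma q0_diff {t : ℕ} (ht : 6 ≤ t) : DifferentiableOn ℂ (q0 t) (SS t) := by
  have huc : TendstoUniformlyOn (fun n w => fseq t n w) (q0 t) Filter.atTop (SS t) := by
    rw [Metric.tendstoUniformlyOn_iff]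
    intro ε hε
    have hten : Filter.Tendsto (fun n : ℕ => 1 * (9 / 10 : ℝ) ^ n / (1 - 9 / 10))
        Filter.atTop (nhds 0) := by
      have h1 : Filter.Tendsto (fun n : ℕ => (9 / 10 : ℝ) ^ n) Filter.atTop (nhds 0) :=
        tendsto_pow_atTop_nhds_zero_of_lt_one (by norm_num) (by norm_num)
      have h2 := (h1.const_mul (1 / (1 - 9 / 10) : ℝ))
      simp only [mul_zero] at h2
      convert h2 using 2 with n
      · ring
    filter_upwards [hten.eventually_lt_const hε] with n hn
    intro w hw
    calc dist (q0 t w) (fseq t n w) = dist (fseq t n w) (q0 t w) := dist_comm _ _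
    _ ≤ 1 * (9 / 10 : ℝ) ^ n / (1 - 9 / 10) := q0_dist ht hw n
    _ < ε := hn
  exact (huc.tendstoLocallyUniformlyOn).differentiableOn
    (Filter.Eventually.of_forall (fseq_diff ht)) Metric.isOpen_ball

end BTIAux


/-- For `t ≥ 5`, on the disc `{w : |w − 1| ≤ 1/2 − 5·(2/3)^t}` the
implicitly defined root `q₀(w)` of `D(q₀(w), w) = 0` with `|q₀(w)| < 2/3` (which exists
and is unique) is analytic in `w`. -/
theorem implicit_root_analytic (t : ℕ) (ht : 5 ≤ t) :
    ∃ q₀ : ℂ → ℂ,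
      (∀ w ∈ Metric.closedBall (1 : ℂ) (1/2 - 5 * (2/3 : ℝ) ^ t),
        ‖q₀ w‖ < 2/3 ∧ DGF t (q₀ w) w = 0 ∧
        ∀ q : ℂ, ‖q‖ < 2/3 → DGF t q w = 0 → q = q₀ w) ∧
      AnalyticOn ℂ q₀ (Metric.closedBall (1 : ℂ) (1/2 - 5 * (2/3 : ℝ) ^ t)) := by
  by_cases h6 : 6 ≤ t
  · have hpos : (0 : ℝ) < (2 / 3 : ℝ) ^ t := by positivity
    have hsub : Metric.closedBall (1 : ℂ) (1/2 - 5 * (2/3 : ℝ) ^ t) ⊆ BTIAux.SS t :=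
      Metric.closedBall_subset_ball (by linarith)
    refine ⟨BTIAux.q0 t, fun w hwc => ?_, ?_⟩
    · have hw : w ∈ BTIAux.SS t := hsub hwc
      exact ⟨BTIAux.q0_lt h6 hw, BTIAux.q0_zero h6 hw,
        fun q hq1 hq2 => BTIAux.q0_unique h6 hw hq1 hq2⟩
    · exact (((BTIAux.q0_diff h6).analyticOnNhd Metric.isOpen_ball).analyticOn).mono hsub
  · have ht5 : t = 5 := by omega
    subst ht5
    have hempty : Metric.closedBall (1 : ℂ) (1/2 - 5 * (2/3 : ℝ) ^ 5) = ∅ :=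
      Metric.closedBall_eq_empty.mpr (by norm_num)
    refine ⟨fun _ => 0, fun w hw => ?_, fun w hw => ?_⟩
    · rw [hempty] at hw; exact absurd hw (Set.notMem_empty w)
    · rw [hempty] at hw; exact absurd hw (Set.notMem_empty w)

end
end
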